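/- arXiv:2208.07052 — 5 statements merged into one kernel-verified Lean document; each statement's English description precedes it below -/
import Mathlib

section
/- For each integer n ≥ 2, each T ∈ (0,∞), and any nonnegative initial data (w_i^0)_{i=1}^n, the truncated finite-dimensional system of ordinary differential equations d/dt w_i^n = (1/2) ∑_{j=1}^{i-1} p_{j,i-j} a_{j,i-j} w_j^n w_{i-j}^n − ∑_{j=1}^{n−i} a_{i,j} w_i^n w_j^n + (1/2) ∑_{j=i+1}^{n} ∑_{k=1}^{j-1} N_{j−k,k}^i (1 − p_{j−k,k}) a_{j−k,k} w_{j−k}^n w_k^n, with w_i^n(0) = w_i^0 for i ∈ {1,…,n}, has a unique continuously differentiable solution w^n = (w_1^n,…,w_n^n) : [0,T] → ℝ^n, and this solution has nonnegative components. -/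
/-- The right-hand side of the truncated discrete coagulation equations with
collisional breakage, for cluster size `i` in the `n`-truncated system, evaluated
at a configuration `w : ℕ → ℝ`. -/
noncomputable def truncRHS (a p : ℕ → ℕ → ℝ) (N : ℕ → ℕ → ℕ → ℝ) (n i : ℕ)
    (w : ℕ → ℝ) : ℝ :=
    (1/2) * ∑ j ∈ Finset.Icc 1 (i-1), p j (i-j) * a j (i-j) * w j * w (i-j)
  - ∑ j ∈ Finset.Icc 1 (n-i), a i j * w i * w j
  + (1/2) * ∑ j ∈ Finset.Icc (i+1) n, ∑ k ∈ Finset.Icc 1 (j-1),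
      N (j-k) k i * (1 - p (j-k) k) * a (j-k) k * w (j-k) * w k


open Set

section SignPersist

lemma nonneg_of_deriv_cond {T : ℝ} {g g' : ℝ → ℝ}
    (hd : ∀ t ∈ Set.Icc (0:ℝ) T, HasDerivWithinAt g (g' t) (Set.Icc 0 T) t)
    (h0 : 0 ≤ g 0) (hp : ∀ t ∈ Set.Icc (0:ℝ) T, g t ≤ 0 → 0 ≤ g' t) :
    ∀ t ∈ Set.Icc (0:ℝ) T, 0 ≤ g t := by
  intro t ht
  by_contra hneg
  push_neg at hneg
  have hcont : ContinuousOn g (Set.Icc 0 T) := fun u hu => (hd u hu).continuousWithinAt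
  set S : Set ℝ := Set.Icc 0 t ∩ g ⁻¹' (Set.Ici 0) with hSdef
  have hsub : Set.Icc 0 t ⊆ Set.Icc 0 T := Set.Icc_subset_Icc_right ht.2
  have hclosed : IsClosed S :=
    ContinuousOn.preimage_isClosed_of_isClosed (hcont.mono hsub) isClosed_Icc isClosed_Ici
  have hScomp : IsCompact S :=
    isCompact_Icc.of_isClosed_subset hclosed (fun u hu => hu.1)
  have hS0 : (0:ℝ) ∈ S := ⟨Set.left_mem_Icc.2 ht.1, h0⟩
  have hSne : S.Nonempty := ⟨0, hS0⟩
  set s := sSup S with hs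
  have hsS : s ∈ S := hScomp.sSup_mem hSne
  obtain ⟨⟨hs0, hst⟩, hgs⟩ := hsS
  have hgs : (0:ℝ) ≤ g s := hgs
  have hslt : s < t := by
    rcases lt_or_eq_of_le hst with h | h
    · exact h
    · exact absurd (h ▸ hgs) (not_le.2 hneg)
  have hbdd : BddAbove S := hScomp.bddAbove
  have hneg' : ∀ u ∈ Set.Ioc s t, g u < 0 := by
    intro u hu
    by_contra h
    push_neg at h
    exact absurd (le_csSup hbdd ⟨⟨hs0.trans hu.1.le, hu.2⟩, h⟩) (not_le.2 hu.1)
  have hmono : MonotoneOn g (Set.Icc s t) := by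
    apply monotoneOn_of_deriv_nonneg (convex_Icc s t)
      (hcont.mono (Set.Icc_subset_Icc hs0 ht.2))
    · intro u hu
      rw [interior_Icc] at hu
      have huT : u ∈ Set.Icc (0:ℝ) T := ⟨hs0.trans hu.1.le, hu.2.le.trans ht.2⟩
      have : HasDerivAt g (g' u) u :=
        (hd u huT).hasDerivAt (Icc_mem_nhds (lt_of_le_of_lt hs0 hu.1) (lt_of_lt_of_le hu.2 ht.2))
      exact this.differentiableAt.differentiableWithinAt
    · intro u hu
      rw [interior_Icc] at hu
      have huT : u ∈ Set.Icc (0:ℝ) T := ⟨hs0.trans hu.1.le, hu.2.le.trans ht.2⟩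
      have hda : HasDerivAt g (g' u) u :=
        (hd u huT).hasDerivAt (Icc_mem_nhds (lt_of_le_of_lt hs0 hu.1) (lt_of_lt_of_le hu.2 ht.2))
      rw [hda.deriv]
      exact hp u huT (hneg' u ⟨hu.1, hu.2.le⟩).le
  have : g s ≤ g t :=
    hmono (Set.left_mem_Icc.2 hslt.le) (Set.right_mem_Icc.2 hslt.le) hslt.le
  linarith

end SignPersist


lemma truncRHS_congr (a p : ℕ → ℕ → ℝ) (N : ℕ → ℕ → ℕ → ℝ) (n i : ℕ)
    (hi : 1 ≤ i) (hin : i ≤ n) (x y : ℕ → ℝ)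
    (hxy : ∀ j, 1 ≤ j → j ≤ n → x j = y j) :
    truncRHS a p N n i x = truncRHS a p N n i y := by
  unfold truncRHS
  congr 2
  · congr 1
    apply Finset.sum_congr rfl
    intro j hj
    rw [Finset.mem_Icc] at hj
    rw [hxy j hj.1 (by omega), hxy (i-j) (by omega) (by omega)]
  · apply Finset.sum_congr rfl
    intro j hj
    rw [Finset.mem_Icc] at hj
    rw [hxy i hi hin, hxy j hj.1 (by omega)]
  · apply Finset.sum_congr rfl
    intro j hj
    rw [Finset.mem_Icc] at hj
    apply Finset.sum_congr rfl
    intro k hk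
    rw [Finset.mem_Icc] at hk
    rw [hxy (j-k) (by omega) (by omega), hxy k hk.1 (by omega)]

lemma truncRHS_nonneg (a p : ℕ → ℕ → ℝ) (N : ℕ → ℕ → ℕ → ℝ) (n i : ℕ)
    (ha_nonneg : ∀ i j, 0 ≤ a i j) (hp_nonneg : ∀ i j, 0 ≤ p i j)
    (hp_le : ∀ i j, p i j ≤ 1) (hN_nonneg : ∀ i j s, 0 ≤ N i j s)
    (x : ℕ → ℝ) (hx : ∀ j, 0 ≤ x j) (hxi : x i = 0) :
    0 ≤ truncRHS a p N n i x := by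
  unfold truncRHS
  have h1 : (0:ℝ) ≤ ∑ j ∈ Finset.Icc 1 (i-1), p j (i-j) * a j (i-j) * x j * x (i-j) := by
    apply Finset.sum_nonneg
    intro j _
    have := hp_nonneg j (i-j); have := ha_nonneg j (i-j); have := hx j; have := hx (i-j)
    positivity
  have h2 : ∑ j ∈ Finset.Icc 1 (n-i), a i j * x i * x j = 0 := by
    apply Finset.sum_eq_zero
    intro j _
    rw [hxi]; ring
  have h3 : (0:ℝ) ≤ ∑ j ∈ Finset.Icc (i+1) n, ∑ k ∈ Finset.Icc 1 (j-1),
      N (j-k) k i * (1 - p (j-k) k) * a (j-k) k * x (j-k) * x k := by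
    apply Finset.sum_nonneg
    intro j _
    apply Finset.sum_nonneg
    intro k _
    have := hN_nonneg (j-k) k i
    have h1p : (0:ℝ) ≤ 1 - p (j-k) k := by linarith [hp_le (j-k) k]
    have := ha_nonneg (j-k) k; have := hx (j-k); have := hx k
    positivity
  rw [h2]
  linarith


/-- index set of pairs -/
def pairSet (n : ℕ) : Finset (ℕ × ℕ) :=
  (Finset.Icc 1 n ×ˢ Finset.Icc 1 n).filter (fun q => q.1 + q.2 ≤ n)

lemma mem_pairSet {n : ℕ} {q : ℕ × ℕ} :
    q ∈ pairSet n ↔ 1 ≤ q.1 ∧ 1 ≤ q.2 ∧ q.1 + q.2 ≤ n := by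
  unfold pairSet
  simp only [Finset.mem_filter, Finset.mem_product, Finset.mem_Icc]
  omega

/-- triangular reindexing -/
lemma sum_triangle (n : ℕ) (G : ℕ → ℕ → ℝ) :
    ∑ i ∈ Finset.Icc 1 n, ∑ j ∈ Finset.Icc 1 (i-1), G i j
      = ∑ q ∈ pairSet n, G (q.1 + q.2) q.1 := by
  rw [Finset.sum_sigma']
  apply Finset.sum_nbij' (fun q => (q.2, q.1 - q.2))
    (fun q => (⟨q.1 + q.2, q.1⟩ : Σ _i : ℕ, ℕ))
  · rintro ⟨i, j⟩ hij
    simp only [Finset.mem_sigma, Finset.mem_Icc] at hij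
    dsimp only
    rw [mem_pairSet]
    omega
  · rintro ⟨u, v⟩ hq
    rw [mem_pairSet] at hq
    dsimp only at hq ⊢
    simp only [Finset.mem_sigma, Finset.mem_Icc]
    omega
  · rintro ⟨i, j⟩ hij
    simp only [Finset.mem_sigma, Finset.mem_Icc] at hij
    dsimp only
    simp only [Sigma.mk.inj_iff, heq_eq_eq]
    exact ⟨by omega, trivial⟩
  · rintro ⟨u, v⟩ hq
    rw [mem_pairSet] at hq
    dsimp only at hq ⊢
    simp only [Prod.mk.injEq]
    exact ⟨trivial, by omega⟩
  · rintro ⟨i, j⟩ hij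
    simp only [Finset.mem_sigma, Finset.mem_Icc] at hij
    have h1 : j + (i - j) = i := by omega
    dsimp only
    rw [h1]

lemma sum_lower (n : ℕ) (G : ℕ → ℕ → ℝ) :
    ∑ i ∈ Finset.Icc 1 n, ∑ j ∈ Finset.Icc 1 (n-i), G i j
      = ∑ q ∈ pairSet n, G q.1 q.2 := by
  rw [Finset.sum_sigma']
  apply Finset.sum_nbij' (fun q => (q.1, q.2)) (fun q => (⟨q.1, q.2⟩ : Σ _i : ℕ, ℕ))
  · rintro ⟨i, j⟩ hij
    simp only [Finset.mem_sigma, Finset.mem_Icc] at hij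
    dsimp only
    rw [mem_pairSet]
    omega
  · rintro ⟨u, v⟩ hq
    rw [mem_pairSet] at hq
    dsimp only at hq ⊢
    simp only [Finset.mem_sigma, Finset.mem_Icc]
    omega
  · rintro ⟨i, j⟩ _; rfl
  · rintro ⟨u, v⟩ _; rfl
  · rintro ⟨i, j⟩ _; rfl

lemma sum_pair_swap (n : ℕ) (G : ℕ → ℕ → ℝ) :
    ∑ q ∈ pairSet n, G q.1 q.2 = ∑ q ∈ pairSet n, G q.2 q.1 := by
  apply Finset.sum_nbij' Prod.swap Prod.swap
  · rintro ⟨u, v⟩ hq; rw [mem_pairSet] at hq ⊢; dsimp at *; omega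
  · rintro ⟨u, v⟩ hq; rw [mem_pairSet] at hq ⊢; dsimp at *; omega
  · rintro ⟨u, v⟩ _; rfl
  · rintro ⟨u, v⟩ _; rfl
  · rintro ⟨u, v⟩ _; rfl

lemma truncRHS_mass (a p : ℕ → ℕ → ℝ) (N : ℕ → ℕ → ℕ → ℝ)
    (ha_symm : ∀ i j, a i j = a j i)
    (hN_mass : ∀ i j, 1 ≤ i → 1 ≤ j →
      ∑ s ∈ Finset.Icc 1 (i+j-1), (Nat.cast s : ℝ) * N i j s = (i : ℝ) + (j : ℝ))
    (n : ℕ) (x : ℕ → ℝ) :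
    ∑ i ∈ Finset.Icc 1 n, (i:ℝ) * truncRHS a p N n i x = 0 := by
  have expand : ∀ i : ℕ, (i:ℝ) * truncRHS a p N n i x =
      (1/2) * (∑ j ∈ Finset.Icc 1 (i-1),
        (i:ℝ) * (p j (i-j) * a j (i-j) * x j * x (i-j)))
      - (∑ j ∈ Finset.Icc 1 (n-i), (i:ℝ) * (a i j * x i * x j))
      + (1/2) * (∑ j ∈ Finset.Icc (i+1) n, ∑ k ∈ Finset.Icc 1 (j-1),
        (i:ℝ) * (N (j-k) k i * (1 - p (j-k) k) * a (j-k) k * x (j-k) * x k)) := by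
    intro i
    have hA : ∑ j ∈ Finset.Icc 1 (i-1), (i:ℝ) * (p j (i-j) * a j (i-j) * x j * x (i-j))
        = (i:ℝ) * ∑ j ∈ Finset.Icc 1 (i-1), p j (i-j) * a j (i-j) * x j * x (i-j) := by
      rw [Finset.mul_sum]
    have hB : ∑ j ∈ Finset.Icc 1 (n-i), (i:ℝ) * (a i j * x i * x j)
        = (i:ℝ) * ∑ j ∈ Finset.Icc 1 (n-i), a i j * x i * x j := by
      rw [Finset.mul_sum]
    have hC : ∑ j ∈ Finset.Icc (i+1) n, ∑ k ∈ Finset.Icc 1 (j-1),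
          (i:ℝ) * (N (j-k) k i * (1 - p (j-k) k) * a (j-k) k * x (j-k) * x k)
        = (i:ℝ) * ∑ j ∈ Finset.Icc (i+1) n, ∑ k ∈ Finset.Icc 1 (j-1),
          N (j-k) k i * (1 - p (j-k) k) * a (j-k) k * x (j-k) * x k := by
      rw [Finset.mul_sum]
      exact Finset.sum_congr rfl fun j _ => by rw [Finset.mul_sum]
    rw [hA, hB, hC, truncRHS]
    ring
  rw [Finset.sum_congr rfl fun i _ => expand i]
  rw [Finset.sum_add_distrib, Finset.sum_sub_distrib, ← Finset.mul_sum, ← Finset.mul_sum]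
  -- the three double sums
  rw [sum_triangle n (fun i j => (i:ℝ) * (p j (i-j) * a j (i-j) * x j * x (i-j)))]
  rw [sum_lower n (fun i j => (i:ℝ) * (a i j * x i * x j))]
  -- breakage term
  have hswapouter : ∑ i ∈ Finset.Icc 1 n, ∑ j ∈ Finset.Icc (i+1) n,
        ∑ k ∈ Finset.Icc 1 (j-1),
          (i:ℝ) * (N (j-k) k i * (1 - p (j-k) k) * a (j-k) k * x (j-k) * x k)
      = ∑ j ∈ Finset.Icc 1 n, ∑ k ∈ Finset.Icc 1 (j-1),
          (j:ℝ) * ((1 - p (j-k) k) * a (j-k) k * x (j-k) * x k) := by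
    rw [Finset.sum_comm' (t' := Finset.Icc 1 n) (s' := fun j => Finset.Icc 1 (j-1))
      (by intro i j; simp only [Finset.mem_Icc]; omega)]
    apply Finset.sum_congr rfl
    intro j hj
    rw [Finset.mem_Icc] at hj
    rw [Finset.sum_comm]
    apply Finset.sum_congr rfl
    intro k hk
    rw [Finset.mem_Icc] at hk
    have hmass := hN_mass (j-k) k (by omega) hk.1
    have hjk : j - k + k = j := by omega
    rw [hjk] at hmass
    have : ∑ i ∈ Finset.Icc 1 (j-1),
          (i:ℝ) * (N (j-k) k i * (1 - p (j-k) k) * a (j-k) k * x (j-k) * x k)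
        = (∑ i ∈ Finset.Icc 1 (j-1), (i:ℝ) * N (j-k) k i)
          * ((1 - p (j-k) k) * a (j-k) k * x (j-k) * x k) := by
      rw [Finset.sum_mul]
      exact Finset.sum_congr rfl fun i _ => by ring
    rw [this, hmass]
    have : ((j:ℝ) - (k:ℝ)) + (k:ℝ) = (j:ℝ) := by ring
    have hcast : ((j-k : ℕ):ℝ) + (k:ℝ) = (j:ℝ) := by
      have : ((j-k : ℕ):ℝ) = (j:ℝ) - (k:ℝ) := by
        have : (k:ℝ) ≤ (j:ℝ) := by exact_mod_cast (by omega : k ≤ j)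
        push_cast [Nat.cast_sub (by omega : k ≤ j)]
        ring
      rw [this]; ring
    rw [hcast]
  rw [hswapouter,
    sum_triangle n (fun j k => (j:ℝ) * ((1 - p (j-k) k) * a (j-k) k * x (j-k) * x k))]
  -- now everything is over pairSet n
  -- normalize the three sums
  have e1 : ∑ q ∈ pairSet n,
        ((q.1 + q.2 : ℕ):ℝ) * (p q.1 ((q.1+q.2)-q.1) * a q.1 ((q.1+q.2)-q.1)
          * x q.1 * x ((q.1+q.2)-q.1))
      = ∑ q ∈ pairSet n, ((q.1:ℝ) + (q.2:ℝ)) * (p q.1 q.2 * a q.1 q.2 * x q.1 * x q.2) := by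
    apply Finset.sum_congr rfl
    intro q _
    rw [Nat.add_sub_cancel_left]
    push_cast
    ring
  have e3 : ∑ q ∈ pairSet n,
        ((q.1 + q.2 : ℕ):ℝ) * ((1 - p ((q.1+q.2)-q.1) q.1) * a ((q.1+q.2)-q.1) q.1
          * x ((q.1+q.2)-q.1) * x q.1)
      = ∑ q ∈ pairSet n, ((q.1:ℝ) + (q.2:ℝ))
          * ((1 - p q.2 q.1) * a q.2 q.1 * x q.2 * x q.1) := by
    apply Finset.sum_congr rfl
    intro q _
    rw [Nat.add_sub_cancel_left]
    push_cast
    ring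
  rw [e1, e3]
  -- symmetrize the loss term
  have e2 : ∑ q ∈ pairSet n, (q.1:ℝ) * (a q.1 q.2 * x q.1 * x q.2)
      = (1/2) * ∑ q ∈ pairSet n, ((q.1:ℝ) + (q.2:ℝ)) * (a q.1 q.2 * x q.1 * x q.2) := by
    have hsw := sum_pair_swap n (fun u v => (u:ℝ) * (a u v * x u * x v))
    have hsw2 : ∑ q ∈ pairSet n, (q.2:ℝ) * (a q.2 q.1 * x q.2 * x q.1)
        = ∑ q ∈ pairSet n, (q.2:ℝ) * (a q.1 q.2 * x q.1 * x q.2) := by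
      apply Finset.sum_congr rfl
      intro q _
      rw [ha_symm q.2 q.1]
      ring
    rw [Finset.mul_sum]
    have : ∀ q : ℕ × ℕ, ((q.1:ℝ) + (q.2:ℝ)) * (a q.1 q.2 * x q.1 * x q.2) =
        (q.1:ℝ) * (a q.1 q.2 * x q.1 * x q.2) + (q.2:ℝ) * (a q.1 q.2 * x q.1 * x q.2) := by
      intro q; ring
    calc ∑ q ∈ pairSet n, (q.1:ℝ) * (a q.1 q.2 * x q.1 * x q.2)
        = (1/2) * (∑ q ∈ pairSet n, (q.1:ℝ) * (a q.1 q.2 * x q.1 * x q.2)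
            + ∑ q ∈ pairSet n, (q.2:ℝ) * (a q.1 q.2 * x q.1 * x q.2)) := by
          rw [← hsw2, ← hsw]; ring
      _ = ∑ q ∈ pairSet n, 1/2 * (((q.1:ℝ) + (q.2:ℝ)) * (a q.1 q.2 * x q.1 * x q.2)) := by
          rw [← Finset.sum_add_distrib, Finset.mul_sum]
          apply Finset.sum_congr rfl
          intro q _; ring
  rw [e2]
  have e4 : ∑ q ∈ pairSet n, ((q.1:ℝ) + (q.2:ℝ)) * ((1 - p q.2 q.1) * a q.2 q.1 * x q.2 * x q.1)
      = ∑ q ∈ pairSet n, ((q.1:ℝ) + (q.2:ℝ)) * ((1 - p q.1 q.2) * a q.1 q.2 * x q.1 * x q.2) := by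
    rw [sum_pair_swap n (fun u v => ((u:ℝ) + (v:ℝ)) * ((1 - p v u) * a v u * x v * x u))]
    apply Finset.sum_congr rfl
    intro q _
    ring
  rw [e4]
  set S1 := ∑ q ∈ pairSet n, ((q.1:ℝ) + (q.2:ℝ)) * (p q.1 q.2 * a q.1 q.2 * x q.1 * x q.2)
    with hS1
  set S2 := ∑ q ∈ pairSet n, ((q.1:ℝ) + (q.2:ℝ)) * (a q.1 q.2 * x q.1 * x q.2) with hS2
  set S3 := ∑ q ∈ pairSet n, ((q.1:ℝ) + (q.2:ℝ)) * ((1 - p q.1 q.2) * a q.1 q.2 * x q.1 * x q.2)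
    with hS3
  have key : S1 + S3 = S2 := by
    rw [hS1, hS3, hS2, ← Finset.sum_add_distrib]
    apply Finset.sum_congr rfl
    intro q _
    ring
  linarith


/-- extension of a finite vector to `ℕ → ℝ` -/
noncomputable def extV (m : ℕ) (y : Fin m → ℝ) : ℕ → ℝ :=
  fun j => if h : j < m then y ⟨j, h⟩ else 0

lemma contDiff_extV (m j : ℕ) : ContDiff ℝ 2 (fun y : Fin m → ℝ => extV m y j) := by
  unfold extV
  by_cases h : j < m
  · simp only [h, dif_pos]
    exact (ContinuousLinearMap.proj (R := ℝ) (φ := fun _ : Fin m => ℝ)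
      (⟨j, h⟩ : Fin m)).contDiff
  · simp only [h, dif_neg, not_false_iff]
    exact contDiff_const

lemma contDiff_truncRHS_extV (a p : ℕ → ℕ → ℝ) (N : ℕ → ℕ → ℕ → ℝ) (n i m : ℕ) :
    ContDiff ℝ 2 (fun y : Fin m → ℝ => truncRHS a p N n i (extV m y)) := by
  unfold truncRHS
  apply ContDiff.add
  apply ContDiff.sub
  · exact contDiff_const.mul (ContDiff.sum fun j _ =>
      ((contDiff_const.mul (contDiff_extV m j)).mul (contDiff_extV m (i-j))))
  · exact ContDiff.sum fun j _ =>
      ((contDiff_const.mul (contDiff_extV m i)).mul (contDiff_extV m j))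
  · exact contDiff_const.mul (ContDiff.sum fun j _ => ContDiff.sum fun k _ =>
      ((contDiff_const.mul (contDiff_extV m (j-k))).mul (contDiff_extV m k)))

lemma lipschitzOnWith_of_contDiff' {E F : Type*} [NormedAddCommGroup E] [NormedSpace ℝ E]
    [NormedAddCommGroup F] [NormedSpace ℝ F] {f : E → F} (hf : ContDiff ℝ 2 f)
    (s : Set E) (hs : Convex ℝ s) (hcs : IsCompact s) :
    ∃ K : NNReal, LipschitzOnWith K f s := by
  have hcont : Continuous (fderiv ℝ f) := hf.continuous_fderiv (by norm_num)
  obtain ⟨M, hM⟩ := hcs.exists_bound_of_continuousOn hcont.continuousOn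
  refine ⟨M.toNNReal, ?_⟩
  apply Convex.lipschitzOnWith_of_nnnorm_fderiv_le
    (fun x _ => ((hf.differentiable (by norm_num)) x : DifferentiableAt ℝ f x)) ?_ hs
  intro x hx
  have h1 : ‖fderiv ℝ f x‖ ≤ M := hM x hx
  have : ‖fderiv ℝ f x‖₊ = Real.toNNReal ‖fderiv ℝ f x‖ := by
    simp [Real.toNNReal, nnnorm, norm_nonneg]
  rw [this]
  exact Real.toNNReal_mono h1

lemma hasDerivWithinAt_pi' {ι : Type*} [Fintype ι] {Φ : ℝ → ι → ℝ} {d : ι → ℝ}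
    {s : Set ℝ} {t : ℝ} (h : ∀ i, HasDerivWithinAt (fun x => Φ x i) (d i) s t) :
    HasDerivWithinAt Φ d s t := by
  exact hasDerivWithinAt_pi.2 h

lemma hasDerivWithinAt_proj {ι : Type*} [Fintype ι] {Φ : ℝ → ι → ℝ} {d : ι → ℝ}
    {s : Set ℝ} {t : ℝ} (h : HasDerivWithinAt Φ d s t) (i : ι) :
    HasDerivWithinAt (fun x => Φ x i) (d i) s t := by
  exact hasDerivWithinAt_pi.1 h i

lemma hasDerivWithinAt_Ici_of_Icc {E : Type*} [NormedAddCommGroup E] [NormedSpace ℝ E]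
    {T t : ℝ} {g : ℝ → E} {d : E} (ht0 : 0 ≤ t) (htT : t < T)
    (h : HasDerivWithinAt g d (Set.Icc 0 T) t) : HasDerivWithinAt g d (Set.Ici t) t := by
  apply h.mono_of_mem_nhdsWithin
  rw [mem_nhdsWithin]
  exact ⟨Set.Iio T, isOpen_Iio, htT, fun u hu => ⟨ht0.trans hu.2, hu.1.le⟩⟩
/-- For each `n ≥ 2`, `T ∈ (0, ∞)` and nonnegative initial data, the truncated
system of the discrete coagulation equations with collisional breakage has a unique
continuously differentiable solution on `[0, T]`, and this solution is nonnegative. -/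
theorem truncated_system_existence_uniqueness
    (a p : ℕ → ℕ → ℝ) (N : ℕ → ℕ → ℕ → ℝ) (A : ℝ) (hA : 0 < A)
    (ha_nonneg : ∀ i j, 0 ≤ a i j) (ha_symm : ∀ i j, a i j = a j i)
    (ha_bound : ∀ i j, 1 ≤ i → 1 ≤ j → a i j ≤ A * ((i : ℝ) + (j : ℝ)))
    (hp_nonneg : ∀ i j, 0 ≤ p i j) (hp_symm : ∀ i j, p i j = p j i)
    (hp_le : ∀ i j, p i j ≤ 1)
    (hN_nonneg : ∀ i j s, 0 ≤ N i j s) (hN_symm : ∀ i j s, N i j s = N j i s)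
    (hN_mass : ∀ i j, 1 ≤ i → 1 ≤ j →
      ∑ s ∈ Finset.Icc 1 (i+j-1), (Nat.cast s : ℝ) * N i j s = (i : ℝ) + (j : ℝ))
    (n : ℕ) (hn : 2 ≤ n) (T : ℝ) (hT : 0 < T)
    (w0 : ℕ → ℝ) (hw0 : ∀ i ∈ Finset.Icc 1 n, 0 ≤ w0 i) :
    ∃ w : ℕ → ℝ → ℝ,
      (∀ i ∈ Finset.Icc 1 n, ContDiffOn ℝ 1 (w i) (Set.Icc 0 T)) ∧
      (∀ i ∈ Finset.Icc 1 n, w i 0 = w0 i) ∧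
      (∀ i ∈ Finset.Icc 1 n, ∀ t ∈ Set.Icc (0:ℝ) T,
        HasDerivWithinAt (w i) (truncRHS a p N n i (fun j => w j t)) (Set.Icc 0 T) t) ∧
      (∀ i ∈ Finset.Icc 1 n, ∀ t ∈ Set.Icc (0:ℝ) T, 0 ≤ w i t) ∧
      (∀ v : ℕ → ℝ → ℝ,
        (∀ i ∈ Finset.Icc 1 n, v i 0 = w0 i) →
        (∀ i ∈ Finset.Icc 1 n, ∀ t ∈ Set.Icc (0:ℝ) T,
          HasDerivWithinAt (v i) (truncRHS a p N n i (fun j => v j t)) (Set.Icc 0 T) t) →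
        ∀ i ∈ Finset.Icc 1 n, ∀ t ∈ Set.Icc (0:ℝ) T, v i t = w i t) := by
  classical
  -- setup
  set M₀ : ℝ := ∑ i ∈ Finset.Icc 1 n, (i:ℝ) * w0 i with hM₀def
  have hM₀0 : 0 ≤ M₀ :=
    Finset.sum_nonneg fun i hi => mul_nonneg (Nat.cast_nonneg i) (hw0 i hi)
  set R : ℝ := M₀ + 1 with hRdef
  have hR0 : 0 ≤ R := by linarith
  have hMR : M₀ ≤ R := by linarith
  -- clamp function
  set cl : ℝ → ℝ := fun z => min (max z 0) R with hcldef
  have hcl0 : ∀ z, 0 ≤ cl z := fun z => le_min (le_max_right z 0) hR0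
  have hclR : ∀ z, cl z ≤ R := fun z => min_le_right _ _
  have hcl_eq : ∀ z, 0 ≤ z → z ≤ R → cl z = z := by
    intro z h0 hzR
    simp only [hcldef]
    rw [max_eq_left h0, min_eq_left hzR]
  have hcl_zero_of_nonpos : ∀ z, z ≤ 0 → cl z = 0 := by
    intro z hz
    simp only [hcldef]
    rw [max_eq_right hz, min_eq_left hR0]
  -- vector field
  set F : (Fin (n+1) → ℝ) → (Fin (n+1) → ℝ) :=
    fun y i => if (i : ℕ) = 0 then 0 else truncRHS a p N n (i : ℕ) (extV (n+1) y) with hFdef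
  set Cl : (Fin (n+1) → ℝ) → (Fin (n+1) → ℝ) := fun y i => cl (y i) with hCldef
  set G : (Fin (n+1) → ℝ) → (Fin (n+1) → ℝ) := fun y => F (Cl y) with hGdef
  have hFsmooth : ContDiff ℝ 2 F := by
    rw [contDiff_pi]
    intro i
    by_cases h : (i : ℕ) = 0
    · simp only [hFdef, h, if_true]
      exact contDiff_const
    · simp only [hFdef, h, if_false]
      exact contDiff_truncRHS_extV a p N n (i : ℕ) (n+1)
  have hFcont : Continuous F := hFsmooth.continuous
  -- box
  have hbox_compact : IsCompact (Metric.closedBall (0 : Fin (n+1) → ℝ) R) :=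
    isCompact_closedBall _ _
  have hbox_convex : Convex ℝ (Metric.closedBall (0 : Fin (n+1) → ℝ) R) :=
    convex_closedBall _ _
  obtain ⟨K, hK⟩ := lipschitzOnWith_of_contDiff' hFsmooth _ hbox_convex hbox_compact
  have hClmem : ∀ y, Cl y ∈ Metric.closedBall (0 : Fin (n+1) → ℝ) R := by
    intro y
    rw [mem_closedBall_zero_iff]
    apply pi_norm_le_iff_of_nonneg hR0 |>.2
    intro i
    rw [Real.norm_eq_abs, abs_le]
    exact ⟨by linarith [hcl0 (y i)], hclR (y i)⟩
  have hCl_lip : LipschitzWith 1 Cl := by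
    apply LipschitzWith.of_dist_le_mul
    intro y z
    simp only [NNReal.coe_one, one_mul]
    apply dist_pi_le_iff dist_nonneg |>.2
    intro i
    rw [Real.dist_eq]
    calc |Cl y i - Cl z i| ≤ |y i - z i| := by
          simp only [hCldef, hcldef]
          exact (abs_min_sub_min_le_max _ _ _ _).trans (by
            simpa using abs_max_sub_max_le_abs (y i) (z i) 0)
      _ = dist (y i) (z i) := (Real.dist_eq _ _).symm
      _ ≤ dist y z := dist_le_pi_dist y z i
  have hGlip : LipschitzWith (K * 1) G := by
    rw [← lipschitzOnWith_univ]
    exact hK.comp hCl_lip.lipschitzOnWith (fun y _ => hClmem y)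
  obtain ⟨C₀, hC₀⟩ := hbox_compact.exists_bound_of_continuousOn hFcont.continuousOn
  set C1 : ℝ := max C₀ 0 with hC1def
  have hC10 : 0 ≤ C1 := le_max_right _ _
  have hGbound : ∀ y, ‖G y‖ ≤ C1 :=
    fun y => le_trans (hC₀ (Cl y) (hClmem y)) (le_max_left _ _)
  -- initial data
  set x₀ : Fin (n+1) → ℝ := fun i => if (i : ℕ) = 0 then 0 else w0 (i : ℕ) with hx₀def
  -- Picard--Lindelöf
  have hPL : IsPicardLindelof (fun _ y => G y) (tmin := 0) (tmax := T)
      ⟨0, Set.mem_Icc.2 ⟨le_refl 0, hT.le⟩⟩ x₀ (C1 * T).toNNReal 0 C1.toNNReal (K * 1) :=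
    { lipschitzOnWith := fun t _ => hGlip.lipschitzOnWith
      continuousOn := fun x _ => continuousOn_const
      norm_le := fun t _ y _ => (hGbound y).trans (Real.le_coe_toNNReal C1)
      mul_max_le := by
        simp [Real.coe_toNNReal _ hC10, Real.coe_toNNReal _ (mul_nonneg hC10 hT.le),
          max_eq_left hT.le] }
  obtain ⟨sol, hsol0, hsolD⟩ : ∃ α : ℝ → Fin (n+1) → ℝ, α 0 = x₀ ∧
      ∀ t ∈ Set.Icc (0:ℝ) T, HasDerivWithinAt α (G (α t)) (Set.Icc 0 T) t :=
    hPL.exists_eq_forall_mem_Icc_hasDerivWithinAt₀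
  have hsolcont : ContinuousOn sol (Set.Icc 0 T) :=
    fun t ht => (hsolD t ht).continuousWithinAt
  have hcomp : ∀ (i : Fin (n+1)), ∀ t ∈ Set.Icc (0:ℝ) T,
      HasDerivWithinAt (fun t => sol t i) (G (sol t) i) (Set.Icc 0 T) t :=
    fun i t ht => hasDerivWithinAt_proj (hsolD t ht) i
  have hF0 : ∀ y, F y 0 = 0 := by
    intro y
    simp only [hFdef, Fin.val_zero, if_true]
  have hx₀0 : x₀ 0 = 0 := by simp only [hx₀def, Fin.val_zero, if_true]
  -- component 0 is identically 0
  have hzero : ∀ t ∈ Set.Icc (0:ℝ) T, sol t 0 = 0 := by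
    have hconst : ∀ t ∈ Set.Icc (0:ℝ) T, sol t 0 = sol 0 0 := by
      apply constant_of_has_deriv_right_zero
      · exact fun t ht => ((hcomp 0 t ht).continuousWithinAt)
      · intro t ht
        have h := hcomp 0 t (Set.mem_Icc.2 ⟨ht.1, ht.2.le⟩)
        have : G (sol t) 0 = 0 := hF0 (Cl (sol t))
        rw [this] at h
        exact hasDerivWithinAt_Ici_of_Icc ht.1 ht.2 h
    intro t ht
    rw [hconst t ht, hsol0, hx₀0]
  -- extension facts
  have hext_pos : ∀ (y : Fin (n+1) → ℝ) (i : ℕ) (h : i < n+1),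
      extV (n+1) y i = y ⟨i, h⟩ := fun y i h => dif_pos h
  have hextCl_nonneg : ∀ (y : Fin (n+1) → ℝ) (j : ℕ), 0 ≤ extV (n+1) (Cl y) j := by
    intro y j
    unfold extV
    by_cases h : j < n+1
    · rw [dif_pos h]; exact hcl0 _
    · rw [dif_neg h]
  -- nonnegativity of all components
  have hnn : ∀ (i : Fin (n+1)), ∀ t ∈ Set.Icc (0:ℝ) T, 0 ≤ sol t i := by
    intro i
    by_cases hi0 : (i : ℕ) = 0
    · have : i = 0 := Fin.ext (by simp [hi0])
      subst this
      intro t ht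
      rw [hzero t ht]
    · apply nonneg_of_deriv_cond (g' := fun t => G (sol t) i) (hcomp i)
      · rw [hsol0]
        simp only [hx₀def, hi0, if_false]
        exact hw0 (i : ℕ) (Finset.mem_Icc.2 ⟨Nat.one_le_iff_ne_zero.2 hi0,
          Nat.lt_succ_iff.1 i.isLt⟩)
      · intro t ht hle
        have hGi : G (sol t) i = truncRHS a p N n (i : ℕ) (extV (n+1) (Cl (sol t))) := by
          simp only [hGdef, hFdef, hi0, if_false]
        rw [hGi]
        apply truncRHS_nonneg a p N n (i : ℕ) ha_nonneg hp_nonneg hp_le hN_nonneg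
          _ (hextCl_nonneg (sol t))
        rw [hext_pos _ _ i.isLt]
        simp only [hCldef]
        rw [Fin.eta]
        exact hcl_zero_of_nonpos _ hle
  -- mass conservation
  set Mass : ℝ → ℝ := fun t => ∑ i ∈ Finset.Icc 1 n, (i:ℝ) * extV (n+1) (sol t) i
    with hMassdef
  have hMassD : ∀ t ∈ Set.Icc (0:ℝ) T, HasDerivWithinAt Mass 0 (Set.Icc 0 T) t := by
    intro t ht
    have hder : HasDerivWithinAt Mass
        (∑ i ∈ Finset.Icc 1 n, (i:ℝ) * truncRHS a p N n i (extV (n+1) (Cl (sol t))))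
        (Set.Icc 0 T) t := by
      apply HasDerivWithinAt.fun_sum
      intro i hi
      rw [Finset.mem_Icc] at hi
      have hlt : i < n + 1 := by omega
      have hieq : (fun u => (i:ℝ) * extV (n+1) (sol u) i)
          = (fun u => (i:ℝ) * sol u ⟨i, hlt⟩) := by
        funext u
        rw [hext_pos _ _ hlt]
      have hival : ((⟨i, hlt⟩ : Fin (n+1)) : ℕ) = i := rfl
      have hcompi := (hcomp ⟨i, hlt⟩ t ht).const_mul (i:ℝ)
      have hGval : G (sol t) ⟨i, hlt⟩
          = truncRHS a p N n i (extV (n+1) (Cl (sol t))) := by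
        simp only [hGdef, hFdef, hival]
        rw [if_neg (by omega)]
      rw [hGval] at hcompi
      -- align the functions
      have : HasDerivWithinAt (fun u => (i:ℝ) * extV (n+1) (sol u) i)
          ((i:ℝ) * truncRHS a p N n i (extV (n+1) (Cl (sol t)))) (Set.Icc 0 T) t := by
        rw [hieq]
        exact hcompi
      exact this
    have hzero' : (∑ i ∈ Finset.Icc 1 n, (i:ℝ)
        * truncRHS a p N n i (extV (n+1) (Cl (sol t)))) = 0 :=
      truncRHS_mass a p N ha_symm hN_mass n _
    rwa [hzero'] at hder
  have hMass_const : ∀ t ∈ Set.Icc (0:ℝ) T, Mass t = Mass 0 := by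
    apply constant_of_has_deriv_right_zero
    · exact fun t ht => (hMassD t ht).continuousWithinAt
    · intro t ht
      exact hasDerivWithinAt_Ici_of_Icc ht.1 ht.2
        (hMassD t (Set.mem_Icc.2 ⟨ht.1, ht.2.le⟩))
  have hMass0 : Mass 0 = M₀ := by
    simp only [hMassdef, hM₀def, hsol0]
    apply Finset.sum_congr rfl
    intro i hi
    rw [Finset.mem_Icc] at hi
    have hlt : i < n + 1 := by omega
    rw [hext_pos _ _ hlt]
    simp only [hx₀def]
    rw [if_neg (by simpa using (by omega : ¬ i = 0))]
  -- upper bound on components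
  have hupper : ∀ (i : ℕ) (hlt : i < n+1), 1 ≤ i → ∀ t ∈ Set.Icc (0:ℝ) T,
      sol t ⟨i, hlt⟩ ≤ M₀ := by
    intro i hlt hi1 t ht
    have hin : i ≤ n := by omega
    have hterm : (i:ℝ) * sol t ⟨i, hlt⟩ ≤ Mass t := by
      have := Finset.single_le_sum
        (f := fun j : ℕ => (j:ℝ) * extV (n+1) (sol t) j)
        (fun j hj => by
          rw [Finset.mem_Icc] at hj
          have hjlt : j < n+1 := by omega
          rw [hext_pos _ _ hjlt]
          exact mul_nonneg (Nat.cast_nonneg j) (hnn ⟨j, hjlt⟩ t ht))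
        (Finset.mem_Icc.2 ⟨hi1, hin⟩)
      rwa [hext_pos _ _ hlt] at this
    rw [hMass_const t ht, hMass0] at hterm
    have h1i : (1:ℝ) ≤ (i:ℝ) := by exact_mod_cast hi1
    nlinarith [hnn ⟨i, hlt⟩ t ht]
  -- the clamp is the identity along the solution
  have hclamp_id : ∀ t ∈ Set.Icc (0:ℝ) T, Cl (sol t) = sol t := by
    intro t ht
    funext i
    by_cases hi0 : (i : ℕ) = 0
    · have : i = 0 := Fin.ext (by simp [hi0])
      subst this
      simp only [hCldef]
      rw [hzero t ht]
      exact hcl_eq 0 le_rfl hR0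
    · simp only [hCldef]
      apply hcl_eq _ (hnn i t ht)
      have := hupper (i : ℕ) i.isLt (Nat.one_le_iff_ne_zero.2 hi0) t ht
      rw [Fin.eta] at this
      linarith
  have hsolF : ∀ t ∈ Set.Icc (0:ℝ) T,
      HasDerivWithinAt sol (F (sol t)) (Set.Icc 0 T) t := by
    intro t ht
    have := hsolD t ht
    simp only [hGdef] at this
    rwa [hclamp_id t ht] at this
  -- the solution
  refine ⟨fun i t => extV (n+1) (sol t) i, ?_, ?_, ?_, ?_, ?_⟩
  · -- ContDiffOn
    intro i hi
    rw [Finset.mem_Icc] at hi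
    have hlt : i < n + 1 := by omega
    have hWeq : (fun t => extV (n+1) (sol t) i) = (fun t => sol t ⟨i, hlt⟩) := by
      funext u; exact hext_pos _ _ hlt
    dsimp only
    rw [hWeq]
    have hD : ∀ t ∈ Set.Icc (0:ℝ) T, HasDerivWithinAt (fun u => sol u ⟨i, hlt⟩)
        (F (sol t) ⟨i, hlt⟩) (Set.Icc 0 T) t :=
      fun t ht => hasDerivWithinAt_proj (hsolF t ht) ⟨i, hlt⟩
    have hUD : UniqueDiffOn ℝ (Set.Icc (0:ℝ) T) := uniqueDiffOn_Icc hT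
    rw [← zero_add (1 : WithTop ℕ∞), contDiffOn_succ_iff_derivWithin hUD]
    refine ⟨fun t ht => (hD t ht).differentiableWithinAt, ?_, ?_⟩
    · intro h; simp at h
    · rw [contDiffOn_zero]
      have hderiv_eq : ∀ t ∈ Set.Icc (0:ℝ) T,
          derivWithin (fun u => sol u ⟨i, hlt⟩) (Set.Icc 0 T) t = F (sol t) ⟨i, hlt⟩ :=
        fun t ht => (hD t ht).derivWithin (hUD t ht)
      apply ContinuousOn.congr _ hderiv_eq
      exact ((continuous_apply (⟨i, hlt⟩ : Fin (n+1))).comp hFcont).comp_continuousOn hsolcont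
  · -- initial condition
    intro i hi
    rw [Finset.mem_Icc] at hi
    have hlt : i < n + 1 := by omega
    dsimp only
    rw [hext_pos _ _ hlt, hsol0]
    simp only [hx₀def]
    rw [if_neg (by simpa using (by omega : ¬ i = 0))]
  · -- the ODE
    intro i hi t ht
    rw [Finset.mem_Icc] at hi
    have hlt : i < n + 1 := by omega
    have hWeq : (fun t => extV (n+1) (sol t) i) = (fun t => sol t ⟨i, hlt⟩) := by
      funext u; exact hext_pos _ _ hlt
    dsimp only
    rw [hWeq]
    have hD := hasDerivWithinAt_proj (hsolF t ht) ⟨i, hlt⟩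
    have hFval : F (sol t) ⟨i, hlt⟩ = truncRHS a p N n i (extV (n+1) (sol t)) := by
      simp only [hFdef]
      rw [if_neg (by simpa using (by omega : ¬ i = 0))]
    rw [hFval] at hD
    exact hD
  · -- nonnegativity
    intro i hi t ht
    rw [Finset.mem_Icc] at hi
    have hlt : i < n + 1 := by omega
    dsimp only
    rw [hext_pos _ _ hlt]
    exact hnn ⟨i, hlt⟩ t ht
  · -- uniqueness
    intro v hv0 hvD i hi t ht
    rw [Finset.mem_Icc] at hi
    have hlt : i < n + 1 := by omega
    set V : ℝ → Fin (n+1) → ℝ := fun u j => if (j : ℕ) = 0 then 0 else v (j : ℕ) u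
      with hVdef
    have hVcomp : ∀ (j : Fin (n+1)), ¬ ((j:ℕ) = 0) →
        (fun u => V u j) = v (j : ℕ) := by
      intro j hj
      funext u
      simp only [hVdef, hj, if_false]
    have hVD : ∀ u ∈ Set.Icc (0:ℝ) T, HasDerivWithinAt V (F (V u)) (Set.Icc 0 T) u := by
      intro u hu
      apply hasDerivWithinAt_pi'
      intro j
      by_cases hj : (j : ℕ) = 0
      · have h1 : (fun u => V u j) = (fun _ => (0:ℝ)) := by
          funext u'; simp only [hVdef, hj, if_true]
        have h2 : F (V u) j = 0 := by
          simp only [hFdef, hj, if_true]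
        rw [h1, h2]
        exact hasDerivWithinAt_const u _ 0
      · have hj1 : 1 ≤ (j : ℕ) := Nat.one_le_iff_ne_zero.2 hj
        have hjn : (j : ℕ) ≤ n := Nat.lt_succ_iff.1 j.isLt
        have hD := hvD (j : ℕ) (Finset.mem_Icc.2 ⟨hj1, hjn⟩) u hu
        have hFval : F (V u) j = truncRHS a p N n (j : ℕ) (fun k => v k u) := by
          simp only [hFdef, hj, if_false]
          apply truncRHS_congr a p N n (j : ℕ) hj1 hjn
          intro k hk1 hkn
          have hklt : k < n+1 := by omega
          rw [hext_pos _ _ hklt]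
          simp only [hVdef]
          rw [if_neg (by simpa using (by omega : ¬ k = 0))]
        rw [hVcomp j hj, hFval]
        exact hD
    have hVcont : ContinuousOn V (Set.Icc 0 T) :=
      fun u hu => (hVD u hu).continuousWithinAt
    obtain ⟨ρ1, hρ1⟩ := isCompact_Icc.exists_bound_of_continuousOn hVcont
    obtain ⟨ρ2, hρ2⟩ := isCompact_Icc.exists_bound_of_continuousOn hsolcont
    set ρ : ℝ := max ρ1 ρ2 with hρdef
    obtain ⟨K2, hK2⟩ := lipschitzOnWith_of_contDiff' hFsmooth
      (Metric.closedBall (0 : Fin (n+1) → ℝ) ρ) (convex_closedBall _ _)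
      (isCompact_closedBall _ _)
    have hEq : Set.EqOn V sol (Set.Icc 0 T) := by
      apply ODE_solution_unique_of_mem_Icc_right
        (v := fun _ y => F y) (s := fun _ => Metric.closedBall (0 : Fin (n+1) → ℝ) ρ)
        (K := K2)
      · exact fun _ _ => hK2
      · exact hVcont
      · exact fun u hu => hasDerivWithinAt_Ici_of_Icc hu.1 hu.2
          (hVD u (Set.mem_Icc.2 ⟨hu.1, hu.2.le⟩))
      · intro u hu
        rw [Metric.mem_closedBall, dist_zero_right]
        exact le_trans (hρ1 u (Set.mem_Icc.2 ⟨hu.1, hu.2.le⟩)) (le_max_left _ _)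
      · exact hsolcont
      · exact fun u hu => hasDerivWithinAt_Ici_of_Icc hu.1 hu.2
          (hsolF u (Set.mem_Icc.2 ⟨hu.1, hu.2.le⟩))
      · intro u hu
        rw [Metric.mem_closedBall, dist_zero_right]
        exact le_trans (hρ2 u (Set.mem_Icc.2 ⟨hu.1, hu.2.le⟩)) (le_max_right _ _)
      · -- initial values agree
        rw [hsol0]
        funext j
        by_cases hj : (j : ℕ) = 0
        · simp only [hVdef, hx₀def, hj, if_true]
        · simp only [hVdef, hx₀def, hj, if_false]
          exact hv0 (j : ℕ) (Finset.mem_Icc.2 ⟨Nat.one_le_iff_ne_zero.2 hj,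
            Nat.lt_succ_iff.1 j.isLt⟩)
    have hVit : v i t = V t ⟨i, hlt⟩ := by
      simp only [hVdef]
      rw [if_neg (by simpa using (by omega : ¬ i = 0))]
    dsimp only
    rw [hVit, hEq ht, hext_pos _ _ hlt]
end

section
/- Let n ≥ 2, T ∈ (0,∞), and let w^n = (w_1^n,…,w_n^n) be the unique nonnegative C^1 solution on [0,T] of the truncated system d/dt w_i^n = (1/2) ∑_{j=1}^{i-1} p_{j,i-j} a_{j,i-j} w_j^n w_{i-j}^n − ∑_{j=1}^{n−i} a_{i,j} w_i^n w_j^n + (1/2) ∑_{j=i+1}^{n} ∑_{k=1}^{j-1} N_{j−k,k}^i (1 − p_{j−k,k}) a_{j−k,k} w_{j−k}^n w_k^n with nonnegative initial data. Then the truncated mass conservation law holds: ∑_{i=1}^{n} i w_i^n(t) = ∑_{i=1}^{n} i w_i^n(0) for all t ∈ [0,T]. -/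
-- triangle reindex: (i,j) with 1 ≤ j ≤ i-1, 1 ≤ i ≤ n  ↦  (j, i-j)
open Finset in
lemma triA (n : ℕ) (f : ℕ → ℕ → ℝ) :
    ∑ i ∈ Icc 1 n, ∑ j ∈ Icc 1 (i-1), f j (i-j)
      = ∑ j ∈ Icc 1 n, ∑ k ∈ Icc 1 (n-j), f j k := by
  rw [Finset.sum_sigma', Finset.sum_sigma']
  refine Finset.sum_nbij' (fun x => ⟨x.2, x.1 - x.2⟩) (fun x => ⟨x.1 + x.2, x.1⟩) ?_ ?_ ?_ ?_ ?_
  · rintro ⟨i,j⟩ h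
    simp only [Finset.mem_sigma, Finset.mem_Icc] at h ⊢
    omega
  · rintro ⟨j,k⟩ h
    simp only [Finset.mem_sigma, Finset.mem_Icc] at h ⊢
    omega
  · rintro ⟨i,j⟩ h
    simp only [Finset.mem_sigma, Finset.mem_Icc] at h
    have : j + (i - j) = i := by omega
    simp [this]
  · rintro ⟨j,k⟩ h
    simp only [Finset.mem_sigma, Finset.mem_Icc] at h
    have : j + k - j = k := by omega
    simp [this]
  · rintro ⟨i,j⟩ h; rfl

-- symmetric triangle swap
open Finset in
lemma triB (n : ℕ) (f : ℕ → ℕ → ℝ) :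
    ∑ i ∈ Icc 1 n, ∑ j ∈ Icc 1 (n-i), f i j
      = ∑ i ∈ Icc 1 n, ∑ j ∈ Icc 1 (n-i), f j i := by
  rw [Finset.sum_sigma', Finset.sum_sigma']
  refine Finset.sum_nbij' (fun x => ⟨x.2, x.1⟩) (fun x => ⟨x.2, x.1⟩) ?_ ?_ ?_ ?_ ?_
  · rintro ⟨i,j⟩ h
    simp only [Finset.mem_sigma, Finset.mem_Icc] at h ⊢
    omega
  · rintro ⟨i,j⟩ h
    simp only [Finset.mem_sigma, Finset.mem_Icc] at h ⊢
    omega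
  · rintro ⟨i,j⟩ h; rfl
  · rintro ⟨i,j⟩ h; rfl
  · rintro ⟨i,j⟩ h; rfl

-- upper triangle swap
open Finset in
lemma triC (n : ℕ) (f : ℕ → ℕ → ℝ) :
    ∑ i ∈ Icc 1 n, ∑ j ∈ Icc (i+1) n, f i j
      = ∑ j ∈ Icc 1 n, ∑ i ∈ Icc 1 (j-1), f i j := by
  rw [Finset.sum_sigma', Finset.sum_sigma']
  refine Finset.sum_nbij' (fun x => ⟨x.2, x.1⟩) (fun x => ⟨x.2, x.1⟩) ?_ ?_ ?_ ?_ ?_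
  · rintro ⟨i,j⟩ h
    simp only [Finset.mem_sigma, Finset.mem_Icc] at h ⊢
    omega
  · rintro ⟨i,j⟩ h
    simp only [Finset.mem_sigma, Finset.mem_Icc] at h ⊢
    omega
  · rintro ⟨i,j⟩ h; rfl
  · rintro ⟨i,j⟩ h; rfl
  · rintro ⟨i,j⟩ h; rfl

open Finset in
lemma key_sum (a p : ℕ → ℕ → ℝ) (N : ℕ → ℕ → ℕ → ℝ)
    (ha_symm : ∀ i j, a i j = a j i)
    (hN_mass : ∀ i j, 1 ≤ i → 1 ≤ j →
      ∑ s ∈ Finset.Icc 1 (i+j-1), (Nat.cast s : ℝ) * N i j s = (i : ℝ) + (j : ℝ))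
    (n : ℕ) (u : ℕ → ℝ) :
    ∑ i ∈ Icc 1 n, (i : ℝ) * truncRHS a p N n i u = 0 := by
  have split : ∑ i ∈ Icc 1 n, (i : ℝ) * truncRHS a p N n i u
      = (∑ i ∈ Icc 1 n, (i:ℝ) * ((1/2) * ∑ j ∈ Icc 1 (i-1),
          p j (i-j) * a j (i-j) * u j * u (i-j)))
      - (∑ i ∈ Icc 1 n, (i:ℝ) * ∑ j ∈ Icc 1 (n-i), a i j * u i * u j)
      + (∑ i ∈ Icc 1 n, (i:ℝ) * ((1/2) * ∑ j ∈ Icc (i+1) n, ∑ k ∈ Icc 1 (j-1),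
          N (j-k) k i * (1 - p (j-k) k) * a (j-k) k * u (j-k) * u k)) := by
    rw [← Finset.sum_sub_distrib, ← Finset.sum_add_distrib]
    refine Finset.sum_congr rfl fun i _ => ?_
    simp only [truncRHS]; ring
  rw [split]
  have hS1 : ∑ i ∈ Icc 1 n, (i:ℝ) * ((1/2) * ∑ j ∈ Icc 1 (i-1),
        p j (i-j) * a j (i-j) * u j * u (i-j))
      = (1/2) * ∑ i ∈ Icc 1 n, ∑ j ∈ Icc 1 (n-i),
        ((i:ℝ)+(j:ℝ)) * p i j * a i j * u i * u j := by
    rw [← triA n (fun j k => ((j:ℝ)+(k:ℝ)) * p j k * a j k * u j * u k)]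
    simp only [Finset.mul_sum]
    refine Finset.sum_congr rfl fun i hi => ?_
    refine Finset.sum_congr rfl fun j hj => ?_
    simp only [Finset.mem_Icc] at hi hj
    have hji : ((j:ℝ) + (((i-j:ℕ)):ℝ)) = (i:ℝ) := by
      rw [← Nat.cast_add]; congr 1; omega
    rw [hji]; ring
  have hS2 : ∑ i ∈ Icc 1 n, (i:ℝ) * ∑ j ∈ Icc 1 (n-i), a i j * u i * u j
      = (1/2) * ∑ i ∈ Icc 1 n, ∑ j ∈ Icc 1 (n-i),
        ((i:ℝ)+(j:ℝ)) * a i j * u i * u j := by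
    have e1 : ∑ i ∈ Icc 1 n, (i:ℝ) * ∑ j ∈ Icc 1 (n-i), a i j * u i * u j
        = ∑ i ∈ Icc 1 n, ∑ j ∈ Icc 1 (n-i), (i:ℝ) * (a i j * u i * u j) := by
      simp only [Finset.mul_sum]
    have e2 := triB n (fun i j => (i:ℝ) * (a i j * u i * u j))
    have h2 : (∑ i ∈ Icc 1 n, ∑ j ∈ Icc 1 (n-i), (i:ℝ) * (a i j * u i * u j))
        + (∑ i ∈ Icc 1 n, ∑ j ∈ Icc 1 (n-i), (i:ℝ) * (a i j * u i * u j))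
        = ∑ i ∈ Icc 1 n, ∑ j ∈ Icc 1 (n-i), ((i:ℝ)+(j:ℝ)) * a i j * u i * u j := by
      nth_rewrite 2 [e2]
      rw [← Finset.sum_add_distrib]
      refine Finset.sum_congr rfl fun i hi => ?_
      rw [← Finset.sum_add_distrib]
      refine Finset.sum_congr rfl fun j hj => ?_
      rw [ha_symm j i]; ring
    rw [e1]; linarith
  have hS3 : ∑ i ∈ Icc 1 n, (i:ℝ) * ((1/2) * ∑ j ∈ Icc (i+1) n, ∑ k ∈ Icc 1 (j-1),
        N (j-k) k i * (1 - p (j-k) k) * a (j-k) k * u (j-k) * u k)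
      = (1/2) * ∑ i ∈ Icc 1 n, ∑ j ∈ Icc 1 (n-i),
        ((i:ℝ)+(j:ℝ)) * (1 - p i j) * a i j * u i * u j := by
    have stepA : ∑ i ∈ Icc 1 n, (i:ℝ) * ((1/2) * ∑ j ∈ Icc (i+1) n, ∑ k ∈ Icc 1 (j-1),
          N (j-k) k i * (1 - p (j-k) k) * a (j-k) k * u (j-k) * u k)
        = (1/2) * ∑ i ∈ Icc 1 n, ∑ j ∈ Icc (i+1) n, ∑ k ∈ Icc 1 (j-1),
          ((i:ℝ) * N (j-k) k i) * ((1 - p (j-k) k) * a (j-k) k * u (j-k) * u k) := by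
      simp only [Finset.mul_sum]
      refine Finset.sum_congr rfl fun i _ => Finset.sum_congr rfl fun j _ =>
        Finset.sum_congr rfl fun k _ => by ring
    rw [stepA, triC n (fun i j => ∑ k ∈ Icc 1 (j-1),
          ((i:ℝ) * N (j-k) k i) * ((1 - p (j-k) k) * a (j-k) k * u (j-k) * u k))]
    have stepB : ∑ j ∈ Icc 1 n, ∑ i ∈ Icc 1 (j-1), ∑ k ∈ Icc 1 (j-1),
          ((i:ℝ) * N (j-k) k i) * ((1 - p (j-k) k) * a (j-k) k * u (j-k) * u k)
        = ∑ j ∈ Icc 1 n, ∑ k ∈ Icc 1 (j-1),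
          (((j-k:ℕ):ℝ)+(k:ℝ)) * ((1 - p (j-k) k) * a (j-k) k * u (j-k) * u k) := by
      refine Finset.sum_congr rfl fun j hj => ?_
      rw [Finset.sum_comm]
      refine Finset.sum_congr rfl fun k hk => ?_
      rw [← Finset.sum_mul]
      congr 1
      simp only [Finset.mem_Icc] at hj hk
      have hrange : j - 1 = (j - k) + k - 1 := by omega
      rw [hrange]
      exact hN_mass (j-k) k (by omega) hk.1
    rw [stepB, triA n (fun x y => ((y:ℝ)+(x:ℝ)) * ((1 - p y x) * a y x * u y * u x)),
      triB n (fun x y => ((y:ℝ)+(x:ℝ)) * ((1 - p y x) * a y x * u y * u x))]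
    congr 1
    exact Finset.sum_congr rfl fun i _ => Finset.sum_congr rfl fun j _ => by ring
  rw [hS1, hS2, hS3]
  have hz : (∑ i ∈ Icc 1 n, ∑ j ∈ Icc 1 (n-i), ((i:ℝ)+(j:ℝ)) * p i j * a i j * u i * u j)
      - (∑ i ∈ Icc 1 n, ∑ j ∈ Icc 1 (n-i), ((i:ℝ)+(j:ℝ)) * a i j * u i * u j)
      + (∑ i ∈ Icc 1 n, ∑ j ∈ Icc 1 (n-i), ((i:ℝ)+(j:ℝ)) * (1 - p i j) * a i j * u i * u j)
      = 0 := by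
    rw [← Finset.sum_sub_distrib, ← Finset.sum_add_distrib]
    apply Finset.sum_eq_zero; intro i _
    rw [← Finset.sum_sub_distrib, ← Finset.sum_add_distrib]
    apply Finset.sum_eq_zero; intro j _
    ring
  linarith

/-- Truncated mass conservation: any nonnegative `C¹` solution of the truncated
coagulation–collisional-breakage system on `[0, T]` conserves the truncated mass
`∑_{i=1}^n i wᵢⁿ(t)`. -/
theorem truncated_mass_conservation
    (a p : ℕ → ℕ → ℝ) (N : ℕ → ℕ → ℕ → ℝ) (A : ℝ) (hA : 0 < A)
    (ha_nonneg : ∀ i j, 0 ≤ a i j) (ha_symm : ∀ i j, a i j = a j i)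
    (ha_bound : ∀ i j, 1 ≤ i → 1 ≤ j → a i j ≤ A * ((i : ℝ) + (j : ℝ)))
    (hp_nonneg : ∀ i j, 0 ≤ p i j) (hp_symm : ∀ i j, p i j = p j i)
    (hp_le : ∀ i j, p i j ≤ 1)
    (hN_nonneg : ∀ i j s, 0 ≤ N i j s) (hN_symm : ∀ i j s, N i j s = N j i s)
    (hN_mass : ∀ i j, 1 ≤ i → 1 ≤ j →
      ∑ s ∈ Finset.Icc 1 (i+j-1), (Nat.cast s : ℝ) * N i j s = (i : ℝ) + (j : ℝ))
    (n : ℕ) (hn : 2 ≤ n) (T : ℝ) (hT : 0 < T)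
    (w : ℕ → ℝ → ℝ)
    (hw_nonneg : ∀ i ∈ Finset.Icc 1 n, ∀ t ∈ Set.Icc (0:ℝ) T, 0 ≤ w i t)
    (hw_init_nonneg : ∀ i ∈ Finset.Icc 1 n, 0 ≤ w i 0)
    (hw_ode : ∀ i ∈ Finset.Icc 1 n, ∀ t ∈ Set.Icc (0:ℝ) T,
      HasDerivWithinAt (w i) (truncRHS a p N n i (fun j => w j t)) (Set.Icc 0 T) t) :
    ∀ t ∈ Set.Icc (0:ℝ) T,
      ∑ i ∈ Finset.Icc 1 n, (Nat.cast i : ℝ) * w i t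
        = ∑ i ∈ Finset.Icc 1 n, (Nat.cast i : ℝ) * w i 0 := by
  have hderiv : ∀ s ∈ Set.Icc (0:ℝ) T,
      HasDerivWithinAt (fun r => ∑ i ∈ Finset.Icc 1 n, (i:ℝ) * w i r) 0 (Set.Icc 0 T) s := by
    intro s hs
    have h0 : HasDerivWithinAt (fun r => ∑ i ∈ Finset.Icc 1 n, (i:ℝ) * w i r)
        (∑ i ∈ Finset.Icc 1 n, (i:ℝ) * truncRHS a p N n i (fun j => w j s))
        (Set.Icc 0 T) s := by
      apply HasDerivWithinAt.fun_sum
      intro i hi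
      exact (hw_ode i hi s hs).const_mul _
    rwa [key_sum a p N ha_symm hN_mass n] at h0
  have hcont : ContinuousOn (fun r => ∑ i ∈ Finset.Icc 1 n, (i:ℝ) * w i r) (Set.Icc 0 T) :=
    fun s hs => (hderiv s hs).continuousWithinAt
  exact constant_of_has_deriv_right_zero hcont (fun x hx => by
    refine (hderiv x ⟨hx.1, le_of_lt hx.2⟩).mono_of_mem_nhdsWithin ?_
    have h1 : Set.Ici x ∩ Set.Iio T ∈ nhdsWithin x (Set.Ici x) :=
      inter_mem_nhdsWithin _ (Iio_mem_nhds hx.2)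
    exact Filter.mem_of_superset h1 (fun y hy => ⟨le_trans hx.1 hy.1, le_of_lt hy.2⟩))
end

section
/- For every β ∈ (1,2] there exists a constant ȷ_β > 0, depending only on β, such that for all positive integers i and j, (i+j)((i+j)^β − i^β − j^β) ≤ ȷ_β (i j^β + i^β j). -/
/-- Tangent line bound: for `0 ≤ b ≤ a`, `a^β - b^β ≤ β * a^(β-1) * (a-b)`. -/
lemma rpow_sub_rpow_le_aux (β a b : ℝ) (hβ : 1 ≤ β) (ha : 0 < a) (hb : 0 ≤ b)
    (hba : b ≤ a) : a ^ β - b ^ β ≤ β * a ^ (β - 1) * (a - b) := by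
  have hs : (-1 : ℝ) ≤ b / a - 1 := by
    have : 0 ≤ b / a := div_nonneg hb ha.le
    linarith
  have h := one_add_mul_self_le_rpow_one_add hs hβ
  rw [show (1 + (b / a - 1)) = b / a by ring] at h
  rw [Real.div_rpow hb ha.le] at h
  have haβ : 0 < a ^ β := Real.rpow_pos_of_pos ha β
  have h2 : (1 + β * (b / a - 1)) * a ^ β ≤ b ^ β := (le_div_iff₀ haβ).mp h
  have key : a ^ β = a ^ (β - 1) * a := by
    rw [← Real.rpow_add_one ha.ne' (β - 1)]; ring_nf
  have e1 : (1 + β * (b / a - 1)) * a ^ β = a ^ β - β * a ^ (β - 1) * (a - b) := by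
    rw [key]; field_simp; ring
  linarith [e1 ▸ h2]

/-- For every `β ∈ (1,2]` there exists a constant `ȷ_β > 0`, depending only on `β`,
such that `(i+j)((i+j)^β − i^β − j^β) ≤ ȷ_β (i j^β + i^β j)` for all positive
integers `i, j`. -/
theorem exists_jbeta_const (β : ℝ) (hβ1 : 1 < β) (hβ2 : β ≤ 2) :
    ∃ jβ : ℝ, 0 < jβ ∧ ∀ i j : ℕ, 1 ≤ i → 1 ≤ j →
      ((i : ℝ) + (j : ℝ)) * (((i : ℝ) + (j : ℝ)) ^ β - (i : ℝ) ^ β - (j : ℝ) ^ β)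
        ≤ jβ * ((i : ℝ) * (j : ℝ) ^ β + (i : ℝ) ^ β * (j : ℝ)) := by
  refine ⟨4 * β, by positivity, ?_⟩
  intro i j hi hj
  set x : ℝ := (i : ℝ) with hxdef
  set y : ℝ := (j : ℝ) with hydef
  have hx : (1 : ℝ) ≤ x := by rw [hxdef]; exact_mod_cast hi
  have hy : (1 : ℝ) ≤ y := by rw [hydef]; exact_mod_cast hj
  have hx0 : (0 : ℝ) < x := by linarith
  have hy0 : (0 : ℝ) < y := by linarith
  have ha : (0 : ℝ) < x + y := by linarith
  have hpow : (x + y) ^ β = (x + y) ^ (β - 1) * (x + y) := by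
    rw [← Real.rpow_add_one ha.ne' (β - 1)]; ring_nf
  have h2β : (2 : ℝ) ^ β ≤ 4 := by
    have : (2 : ℝ) ^ β ≤ (2 : ℝ) ^ (2 : ℝ) :=
      Real.rpow_le_rpow_of_exponent_le (by norm_num) hβ2
    calc (2:ℝ) ^ β ≤ (2:ℝ) ^ (2:ℝ) := this
      _ = 4 := by
          rw [show (2:ℝ) = ((2:ℕ):ℝ) by norm_num, Real.rpow_natCast]; norm_num
  rcases le_total x y with hxy | hxy
  · -- x ≤ y : use a = x+y, b = y
    have hkey := rpow_sub_rpow_le_aux β (x + y) y hβ1.le ha hy0.le (by linarith)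
    -- (x+y)^β - y^β ≤ β (x+y)^{β-1} x
    have hxβ : (0 : ℝ) ≤ x ^ β := (Real.rpow_pos_of_pos hx0 β).le
    have hD : (x + y) ^ β - x ^ β - y ^ β ≤ β * (x + y) ^ (β - 1) * x := by
      have : (x + y) - y = x := by ring
      rw [this] at hkey; linarith
    have step1 : (x + y) * ((x + y) ^ β - x ^ β - y ^ β)
        ≤ β * (x + y) ^ β * x := by
      have h1 : (x + y) * ((x + y) ^ β - x ^ β - y ^ β)
          ≤ (x + y) * (β * (x + y) ^ (β - 1) * x) :=
        mul_le_mul_of_nonneg_left hD ha.le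
      calc (x + y) * ((x + y) ^ β - x ^ β - y ^ β)
          ≤ (x + y) * (β * (x + y) ^ (β - 1) * x) := h1
        _ = β * ((x + y) ^ (β - 1) * (x + y)) * x := by ring
        _ = β * (x + y) ^ β * x := by rw [← hpow]
    have hle2y : (x + y) ^ β ≤ 4 * y ^ β := by
      have h1 : (x + y) ^ β ≤ (2 * y) ^ β :=
        Real.rpow_le_rpow ha.le (by linarith) (by linarith)
      have h2 : (2 * y) ^ β = 2 ^ β * y ^ β :=
        Real.mul_rpow (by norm_num) hy0.le
      have hyβ : (0 : ℝ) < y ^ β := Real.rpow_pos_of_pos hy0 β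
      nlinarith
    have hyβ : (0 : ℝ) < y ^ β := Real.rpow_pos_of_pos hy0 β
    have hxβ0 : (0 : ℝ) < x ^ β := Real.rpow_pos_of_pos hx0 β
    have hfin : (0:ℝ) ≤ β * (x ^ β * y) := by positivity
    nlinarith [mul_le_mul_of_nonneg_right hle2y (mul_pos (by linarith : (0:ℝ) < β) hx0).le, hfin]
  · -- y ≤ x : use a = x+y, b = x
    have hkey := rpow_sub_rpow_le_aux β (x + y) x hβ1.le ha hx0.le (by linarith)
    have hyβ : (0 : ℝ) ≤ y ^ β := (Real.rpow_pos_of_pos hy0 β).le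
    have hD : (x + y) ^ β - x ^ β - y ^ β ≤ β * (x + y) ^ (β - 1) * y := by
      have : (x + y) - x = y := by ring
      rw [this] at hkey; linarith
    have step1 : (x + y) * ((x + y) ^ β - x ^ β - y ^ β)
        ≤ β * (x + y) ^ β * y := by
      have h1 : (x + y) * ((x + y) ^ β - x ^ β - y ^ β)
          ≤ (x + y) * (β * (x + y) ^ (β - 1) * y) :=
        mul_le_mul_of_nonneg_left hD ha.le
      calc (x + y) * ((x + y) ^ β - x ^ β - y ^ β)
          ≤ (x + y) * (β * (x + y) ^ (β - 1) * y) := h1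
        _ = β * ((x + y) ^ (β - 1) * (x + y)) * y := by ring
        _ = β * (x + y) ^ β * y := by rw [← hpow]
    have hle2x : (x + y) ^ β ≤ 4 * x ^ β := by
      have h1 : (x + y) ^ β ≤ (2 * x) ^ β :=
        Real.rpow_le_rpow ha.le (by linarith) (by linarith)
      have h2 : (2 * x) ^ β = 2 ^ β * x ^ β :=
        Real.mul_rpow (by norm_num) hx0.le
      have hxβ : (0 : ℝ) < x ^ β := Real.rpow_pos_of_pos hx0 β
      nlinarith
    have hxβ : (0 : ℝ) < x ^ β := Real.rpow_pos_of_pos hx0 β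
    have hyβ0 : (0 : ℝ) < y ^ β := Real.rpow_pos_of_pos hy0 β
    have hfin : (0:ℝ) ≤ β * (y ^ β * x) := by positivity
    nlinarith [mul_le_mul_of_nonneg_right hle2x (mul_pos (by linarith : (0:ℝ) < β) hy0).le, hfin]
end

section
/- Fix T ∈ (0,∞), constants A > 0 and α_0 > 0, and assume 0 ≤ a_{i,j} = a_{j,i} ≤ A(i+j), 0 ≤ p_{i,j} = p_{j,i} ≤ 1, and 0 ≤ N_{i,j}^s ≤ α_0 for all i, j ≥ 1 and s = 1,…,i+j−1. Let n ≥ 2, let w^n = (w_i^n)_{i≥1} be the zero-extension of the unique nonnegative solution of the truncated coagulation–collisional-breakage system on [0,T] with nonnegative initial data of first moment Λ_1 = ∑_{i≥1} i w_i^0, and let x = (x_i)_{i≥1} solve the majorant system d/dt x_i = (A/2) ∑_{j=1}^{i−1} i x_j x_{i−j} + A α_0 Λ_1² with x_i(0) = x_i^0 for each i ≥ 1. If w_i^n(0) ≤ x_i(0) for every i ∈ ℕ, then w_i^n(t) ≤ x_i(t) for every i ∈ ℕ and every t ∈ [0,T]. -/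
section Aux

private lemma sum_tri_swap (n : ℕ) (h : ℕ → ℕ → ℝ) :
    ∑ i ∈ Finset.Icc 1 n, ∑ j ∈ Finset.Icc (i+1) n, h i j
      = ∑ j ∈ Finset.Icc 1 n, ∑ i ∈ Finset.Icc 1 (j-1), h i j := by
  refine (Finset.sum_sigma' _ _ _).trans (Eq.trans ?_ (Finset.sum_sigma' (Finset.Icc 1 n)
    (fun j => Finset.Icc 1 (j-1)) (fun j i => h i j)).symm)
  refine Finset.sum_nbij' (i := fun q => ⟨q.2, q.1⟩) (j := fun q => ⟨q.2, q.1⟩) ?_ ?_ ?_ ?_ ?_ <;>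
    rintro ⟨u, v⟩ hm <;> simp only [Finset.mem_sigma, Finset.mem_Icc] at * <;>
      first | rfl | omega | exact ⟨by omega, trivial⟩

private lemma conv_reindex (n : ℕ) (g : ℕ → ℕ → ℝ) :
    ∑ i ∈ Finset.Icc 1 n, ∑ j ∈ Finset.Icc 1 (i-1), g (i-j) j
      = ∑ i ∈ Finset.Icc 1 n, ∑ j ∈ Finset.Icc 1 (n-i), g i j := by
  refine (Finset.sum_sigma' _ _ _).trans (Eq.trans ?_ (Finset.sum_sigma' (Finset.Icc 1 n)
    (fun i => Finset.Icc 1 (n-i)) (fun i j => g i j)).symm)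
  refine Finset.sum_nbij' (i := fun q => ⟨q.1 - q.2, q.2⟩) (j := fun q => ⟨q.1 + q.2, q.2⟩)
    ?_ ?_ ?_ ?_ ?_ <;>
    rintro ⟨u, v⟩ hm <;> simp only [Finset.mem_sigma, Finset.mem_Icc, Sigma.mk.inj_iff,
      heq_eq_eq] at * <;> first | rfl | omega | exact ⟨by omega, trivial⟩

private lemma sum_sym (n : ℕ) (g : ℕ → ℕ → ℝ) :
    ∑ i ∈ Finset.Icc 1 n, ∑ j ∈ Finset.Icc 1 (n-i), g i j
      = ∑ i ∈ Finset.Icc 1 n, ∑ j ∈ Finset.Icc 1 (n-i), g j i := by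
  refine (Finset.sum_sigma' _ _ _).trans (Eq.trans ?_ (Finset.sum_sigma' (Finset.Icc 1 n)
    (fun i => Finset.Icc 1 (n-i)) (fun i j => g j i)).symm)
  refine Finset.sum_nbij' (i := fun q => ⟨q.2, q.1⟩) (j := fun q => ⟨q.2, q.1⟩) ?_ ?_ ?_ ?_ ?_ <;>
    rintro ⟨u, v⟩ hm <;> simp only [Finset.mem_sigma, Finset.mem_Icc] at * <;>
      first | rfl | omega | exact ⟨by omega, trivial⟩

/-- Derivative comparison on `[0,T]`. -/
private lemma deriv_comp_le {T : ℝ} {f g f' g' : ℝ → ℝ}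
    (hf : ∀ t ∈ Set.Icc (0:ℝ) T, HasDerivWithinAt f (f' t) (Set.Icc 0 T) t)
    (hg : ∀ t ∈ Set.Icc (0:ℝ) T, HasDerivWithinAt g (g' t) (Set.Icc 0 T) t)
    (hle : ∀ t ∈ Set.Icc (0:ℝ) T, f' t ≤ g' t) (h0 : f 0 ≤ g 0) :
    ∀ t ∈ Set.Icc (0:ℝ) T, f t ≤ g t := by
  intro t ht
  have h0m : (0:ℝ) ∈ Set.Icc (0:ℝ) T := ⟨le_refl _, le_trans ht.1 ht.2⟩
  have hmono : MonotoneOn (fun s => g s - f s) (Set.Icc (0:ℝ) T) := by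
    apply monotoneOn_of_hasDerivWithinAt_nonneg (f' := fun s => g' s - f' s) (convex_Icc 0 T)
    · intro s hs
      exact ((hg s hs).sub (hf s hs)).continuousWithinAt
    · intro s hs
      have hs' : s ∈ Set.Icc (0:ℝ) T := interior_subset hs
      exact (((hg s hs').sub (hf s hs')).mono interior_subset)
    · intro s hs
      have hs' : s ∈ Set.Icc (0:ℝ) T := interior_subset hs
      linarith [hle s hs']
  have := hmono h0m ht ht.1
  simp only at this
  linarith

/-- Constancy from zero derivative on `[0,T]`. -/
private lemma eq_of_deriv_zero {T : ℝ} {f : ℝ → ℝ}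
    (hf : ∀ t ∈ Set.Icc (0:ℝ) T, HasDerivWithinAt f 0 (Set.Icc 0 T) t)
    {t : ℝ} (ht : t ∈ Set.Icc (0:ℝ) T) : f t = f 0 := by
  have h0m : (0:ℝ) ∈ Set.Icc (0:ℝ) T := ⟨le_refl _, le_trans ht.1 ht.2⟩
  have := Convex.norm_image_sub_le_of_norm_hasDerivWithin_le
    (f' := fun _ => (0:ℝ)) (C := 0) hf (fun x _ => by simp) (convex_Icc 0 T) h0m ht
  simp only [zero_mul, norm_le_zero_iff, sub_eq_zero] at this
  exact this

end Aux

/-- The first moment of the truncated system is conserved. -/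
private lemma mass_identity (a p : ℕ → ℕ → ℝ) (N : ℕ → ℕ → ℕ → ℝ)
    (ha_symm : ∀ i j, a i j = a j i) (hp_symm : ∀ i j, p i j = p j i)
    (hN_mass : ∀ i j, 1 ≤ i → 1 ≤ j →
      ∑ s ∈ Finset.Icc 1 (i+j-1), (Nat.cast s : ℝ) * N i j s = (i : ℝ) + (j : ℝ))
    (n : ℕ) (v : ℕ → ℝ) :
    ∑ i ∈ Finset.Icc 1 n, (i : ℝ) * truncRHS a p N n i v = 0 := by
  set F : ℕ → ℕ → ℝ := fun l k => a l k * v l * v k with hF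
  have h3 : ∑ i ∈ Finset.Icc 1 n, (i : ℝ) * ∑ j ∈ Finset.Icc (i+1) n, ∑ k ∈ Finset.Icc 1 (j-1),
        N (j-k) k i * (1 - p (j-k) k) * a (j-k) k * v (j-k) * v k
      = ∑ j ∈ Finset.Icc 1 n, ∑ k ∈ Finset.Icc 1 (j-1), (j : ℝ) * ((1 - p (j-k) k) * F (j-k) k) := by
    have step1 : ∀ i ∈ Finset.Icc 1 n, (i : ℝ) * ∑ j ∈ Finset.Icc (i+1) n, ∑ k ∈ Finset.Icc 1 (j-1),
          N (j-k) k i * (1 - p (j-k) k) * a (j-k) k * v (j-k) * v k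
        = ∑ j ∈ Finset.Icc (i+1) n, ∑ k ∈ Finset.Icc 1 (j-1),
          (i : ℝ) * (N (j-k) k i * (1 - p (j-k) k) * a (j-k) k * v (j-k) * v k) := by
      intro i _; rw [Finset.mul_sum]; exact Finset.sum_congr rfl fun j _ => Finset.mul_sum _ _ _
    rw [Finset.sum_congr rfl step1,
      sum_tri_swap n (fun i j => ∑ k ∈ Finset.Icc 1 (j-1),
        (i : ℝ) * (N (j-k) k i * (1 - p (j-k) k) * a (j-k) k * v (j-k) * v k))]
    refine Finset.sum_congr rfl fun j hj => ?_
    rw [Finset.sum_comm]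
    refine Finset.sum_congr rfl fun k hk => ?_
    simp only [Finset.mem_Icc] at hj hk
    have hjk : (j - k) + k = j := by omega
    have hmass := hN_mass (j-k) k (by omega) (by omega)
    rw [hjk] at hmass
    calc ∑ i ∈ Finset.Icc 1 (j-1), (i : ℝ) * (N (j-k) k i * (1 - p (j-k) k) * a (j-k) k * v (j-k) * v k)
        = (∑ i ∈ Finset.Icc 1 (j-1), (i : ℝ) * N (j-k) k i) * ((1 - p (j-k) k) * F (j-k) k) := by
          rw [Finset.sum_mul]; exact Finset.sum_congr rfl fun i _ => by simp [hF]; ring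
      _ = (j : ℝ) * ((1 - p (j-k) k) * F (j-k) k) := by
          rw [hmass]
          have : ((j - k : ℕ) : ℝ) + (k : ℝ) = (j : ℝ) := by
            rw [← Nat.cast_add, hjk]
          rw [this]
  have h1 : ∑ i ∈ Finset.Icc 1 n, (i : ℝ) * ∑ j ∈ Finset.Icc 1 (i-1),
        p j (i-j) * a j (i-j) * v j * v (i-j)
      = ∑ i ∈ Finset.Icc 1 n, ∑ j ∈ Finset.Icc 1 (i-1), (i : ℝ) * (p (i-j) j * F (i-j) j) := by
    refine Finset.sum_congr rfl fun i _ => ?_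
    rw [Finset.mul_sum]
    refine Finset.sum_congr rfl fun j _ => ?_
    rw [hp_symm j (i-j), ha_symm j (i-j)]; simp only [hF]; ring
  have h13 : ∑ i ∈ Finset.Icc 1 n, ∑ j ∈ Finset.Icc 1 (i-1), (i : ℝ) * (p (i-j) j * F (i-j) j)
      + ∑ j ∈ Finset.Icc 1 n, ∑ k ∈ Finset.Icc 1 (j-1), (j : ℝ) * ((1 - p (j-k) k) * F (j-k) k)
      = ∑ i ∈ Finset.Icc 1 n, ∑ j ∈ Finset.Icc 1 (n-i), ((i : ℝ) + (j : ℝ)) * F i j := by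
    rw [← Finset.sum_add_distrib]
    have : ∀ i ∈ Finset.Icc 1 n,
        (∑ j ∈ Finset.Icc 1 (i-1), (i : ℝ) * (p (i-j) j * F (i-j) j))
        + ∑ k ∈ Finset.Icc 1 (i-1), (i : ℝ) * ((1 - p (i-k) k) * F (i-k) k)
        = ∑ j ∈ Finset.Icc 1 (i-1), (((i-j : ℕ) : ℝ) + (j : ℝ)) * F (i-j) j := by
      intro i _
      rw [← Finset.sum_add_distrib]
      refine Finset.sum_congr rfl fun j hj => ?_
      simp only [Finset.mem_Icc] at hj
      have : ((i - j : ℕ) : ℝ) + (j : ℝ) = (i : ℝ) := by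
        rw [← Nat.cast_add]; congr 1; omega
      rw [this]; ring
    rw [Finset.sum_congr rfl this, conv_reindex n (fun l j => ((l : ℝ) + (j : ℝ)) * F l j)]
  have h2 : ∑ i ∈ Finset.Icc 1 n, (i : ℝ) * ∑ j ∈ Finset.Icc 1 (n-i), a i j * v i * v j
      = ∑ i ∈ Finset.Icc 1 n, ∑ j ∈ Finset.Icc 1 (n-i), (i : ℝ) * F i j :=
    Finset.sum_congr rfl fun i _ => Finset.mul_sum _ _ _
  have hFsymm : ∀ i j, F j i = F i j := by
    intro i j; simp only [hF]; rw [ha_symm j i]; ring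
  have h2' : ∑ i ∈ Finset.Icc 1 n, ∑ j ∈ Finset.Icc 1 (n-i), ((i : ℝ) + (j : ℝ)) * F i j
      = 2 * ∑ i ∈ Finset.Icc 1 n, ∑ j ∈ Finset.Icc 1 (n-i), (i : ℝ) * F i j := by
    have e1 : ∑ i ∈ Finset.Icc 1 n, ∑ j ∈ Finset.Icc 1 (n-i), ((i : ℝ) + (j : ℝ)) * F i j
        = ∑ i ∈ Finset.Icc 1 n, ∑ j ∈ Finset.Icc 1 (n-i), ((i : ℝ) * F i j + (j : ℝ) * F i j) := by
      refine Finset.sum_congr rfl fun i _ => Finset.sum_congr rfl fun j _ => by ring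
    have e2 : ∑ i ∈ Finset.Icc 1 n, ∑ j ∈ Finset.Icc 1 (n-i), (j : ℝ) * F i j
        = ∑ i ∈ Finset.Icc 1 n, ∑ j ∈ Finset.Icc 1 (n-i), (i : ℝ) * F i j := by
      rw [sum_sym n (fun i j => (j : ℝ) * F i j)]
      exact Finset.sum_congr rfl fun i _ => Finset.sum_congr rfl fun j _ => by rw [hFsymm]
    simp only [e1, Finset.sum_add_distrib, e2]; ring
  have expand : ∀ i : ℕ, (i : ℝ) * truncRHS a p N n i v
      = (1/2) * ((i : ℝ) * ∑ j ∈ Finset.Icc 1 (i-1), p j (i-j) * a j (i-j) * v j * v (i-j))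
        - (i : ℝ) * ∑ j ∈ Finset.Icc 1 (n-i), a i j * v i * v j
        + (1/2) * ((i : ℝ) * ∑ j ∈ Finset.Icc (i+1) n, ∑ k ∈ Finset.Icc 1 (j-1),
            N (j-k) k i * (1 - p (j-k) k) * a (j-k) k * v (j-k) * v k) := by
    intro i; simp only [truncRHS]; ring
  rw [Finset.sum_congr rfl fun i _ => expand i]
  rw [Finset.sum_add_distrib, Finset.sum_sub_distrib, ← Finset.mul_sum, ← Finset.mul_sum,
    h1, h2, h3]
  linarith [h13, h2']

/-- Comparison with the majorant system: if `x = (xᵢ)` solves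
`dxᵢ/dt = (A/2) ∑_{j=1}^{i−1} i xⱼ x_{i−j} + A α₀ Λ₁²` and dominates the
(zero-extended) truncated solution initially, it dominates it for all times. -/
theorem truncated_solution_le_majorant
    (T : ℝ) (hT : 0 < T) (A α₀ : ℝ) (hA : 0 < A) (hα₀ : 0 < α₀)
    (a p : ℕ → ℕ → ℝ) (N : ℕ → ℕ → ℕ → ℝ)
    (ha_nonneg : ∀ i j, 0 ≤ a i j) (ha_symm : ∀ i j, a i j = a j i)
    (ha_bound : ∀ i j, 1 ≤ i → 1 ≤ j → a i j ≤ A * ((i : ℝ) + (j : ℝ)))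
    (hp_nonneg : ∀ i j, 0 ≤ p i j) (hp_symm : ∀ i j, p i j = p j i)
    (hp_le : ∀ i j, p i j ≤ 1)
    (hN_nonneg : ∀ i j s, 0 ≤ N i j s) (hN_symm : ∀ i j s, N i j s = N j i s)
    (hN_bound : ∀ i j s, 1 ≤ i → 1 ≤ j → s ∈ Finset.Icc 1 (i+j-1) → N i j s ≤ α₀)
    (hN_mass : ∀ i j, 1 ≤ i → 1 ≤ j →
      ∑ s ∈ Finset.Icc 1 (i+j-1), (Nat.cast s : ℝ) * N i j s = (i : ℝ) + (j : ℝ))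
    (n : ℕ) (hn : 2 ≤ n)
    (w : ℕ → ℝ → ℝ)
    (hw_nonneg : ∀ i ∈ Finset.Icc 1 n, ∀ t ∈ Set.Icc (0:ℝ) T, 0 ≤ w i t)
    (hw_init_nonneg : ∀ i ∈ Finset.Icc 1 n, 0 ≤ w i 0)
    (hw_ode : ∀ i ∈ Finset.Icc 1 n, ∀ t ∈ Set.Icc (0:ℝ) T,
      HasDerivWithinAt (w i) (truncRHS a p N n i (fun j => w j t)) (Set.Icc 0 T) t)
    (hw_ext : ∀ i, n < i → ∀ t : ℝ, w i t = 0)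
    (Λ₁ : ℝ) (hΛ₁ : Λ₁ = ∑' i : ℕ, (Nat.cast i : ℝ) * w i 0)
    (x : ℕ → ℝ → ℝ)
    (hx_ode : ∀ i, 1 ≤ i → ∀ t ∈ Set.Icc (0:ℝ) T,
      HasDerivWithinAt (x i)
        (A / 2 * ∑ j ∈ Finset.Icc 1 (i-1), (Nat.cast i : ℝ) * x j t * x (i-j) t
          + A * α₀ * Λ₁ ^ 2) (Set.Icc 0 T) t)
    (h_init : ∀ i, 1 ≤ i → w i 0 ≤ x i 0) :
    ∀ i, 1 ≤ i → ∀ t ∈ Set.Icc (0:ℝ) T, w i t ≤ x i t := by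
  -- nonnegativity of w for all positive indices
  have hwpos : ∀ j, 1 ≤ j → ∀ t ∈ Set.Icc (0:ℝ) T, 0 ≤ w j t := by
    intro j hj t ht
    by_cases hjn : j ≤ n
    · exact hw_nonneg j (Finset.mem_Icc.mpr ⟨hj, hjn⟩) t ht
    · rw [hw_ext j (by omega) t]
  -- the first moment at time 0 is a finite sum
  have hM0 : Λ₁ = ∑ i ∈ Finset.Icc 1 n, (i : ℝ) * w i 0 := by
    rw [hΛ₁]
    apply tsum_eq_sum
    intro b hb
    simp only [Finset.mem_Icc, not_and_or, not_le] at hb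
    rcases hb with hb | hb
    · have : b = 0 := by omega
      simp [this]
    · rw [hw_ext b hb]; ring
  -- mass conservation
  have hMconst : ∀ t ∈ Set.Icc (0:ℝ) T, ∑ i ∈ Finset.Icc 1 n, (i : ℝ) * w i t = Λ₁ := by
    intro t ht
    have hd : ∀ s ∈ Set.Icc (0:ℝ) T,
        HasDerivWithinAt (fun u => ∑ i ∈ Finset.Icc 1 n, (i : ℝ) * w i u) 0 (Set.Icc 0 T) s := by
      intro s hs
      have hsum : HasDerivWithinAt (fun u => ∑ i ∈ Finset.Icc 1 n, (i : ℝ) * w i u)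
          (∑ i ∈ Finset.Icc 1 n, (i : ℝ) * truncRHS a p N n i (fun j => w j s))
          (Set.Icc 0 T) s :=
        HasDerivWithinAt.fun_sum (fun i hi => ((hw_ode i hi s hs).const_mul ((i : ℝ))))
      rwa [mass_identity a p N ha_symm hp_symm hN_mass n _] at hsum
    rw [eq_of_deriv_zero hd ht, hM0]
  have hΛpos : 0 ≤ Λ₁ := by
    rw [hM0]
    exact Finset.sum_nonneg fun i hi => mul_nonneg (Nat.cast_nonneg i)
      (hw_init_nonneg i hi)
  -- zeroth moment bound
  have hS_le : ∀ t ∈ Set.Icc (0:ℝ) T, ∑ k ∈ Finset.Icc 1 n, w k t ≤ Λ₁ := by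
    intro t ht
    rw [← hMconst t ht]
    refine Finset.sum_le_sum fun k hk => ?_
    have hk1 : 1 ≤ k := (Finset.mem_Icc.mp hk).1
    have hw := hwpos k hk1 t ht
    have : (1 : ℝ) ≤ (k : ℝ) := by exact_mod_cast hk1
    nlinarith
  have hS_nonneg : ∀ t ∈ Set.Icc (0:ℝ) T, 0 ≤ ∑ k ∈ Finset.Icc 1 n, w k t := by
    intro t ht
    exact Finset.sum_nonneg fun k hk => hwpos k (Finset.mem_Icc.mp hk).1 t ht
  -- breakage bound
  have hbreak : ∀ i, 1 ≤ i → ∀ t ∈ Set.Icc (0:ℝ) T,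
      (1/2) * ∑ j ∈ Finset.Icc (i+1) n, ∑ k ∈ Finset.Icc 1 (j-1),
        N (j-k) k i * (1 - p (j-k) k) * a (j-k) k * w (j-k) t * w k t
      ≤ A * α₀ * Λ₁ ^ 2 := by
    intro i hi t ht
    have key : ∑ j ∈ Finset.Icc (i+1) n, ∑ k ∈ Finset.Icc 1 (j-1),
          N (j-k) k i * (1 - p (j-k) k) * a (j-k) k * w (j-k) t * w k t
        ≤ A * α₀ * (2 * Λ₁ ^ 2) := by
      have term_nonneg : ∀ l k : ℕ, 1 ≤ l → 1 ≤ k →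
          0 ≤ A * α₀ * (((l : ℝ) + (k : ℝ)) * (w l t * w k t)) := by
        intro l k hl hk
        have h2 := hwpos l hl t ht
        have h3 := hwpos k hk t ht
        have h1 : (0:ℝ) ≤ (l : ℝ) + (k : ℝ) := by positivity
        have hAa : (0:ℝ) ≤ A * α₀ := by positivity
        exact mul_nonneg hAa (mul_nonneg h1 (mul_nonneg h2 h3))
      have step1 : ∑ j ∈ Finset.Icc (i+1) n, ∑ k ∈ Finset.Icc 1 (j-1),
            N (j-k) k i * (1 - p (j-k) k) * a (j-k) k * w (j-k) t * w k t
          ≤ ∑ j ∈ Finset.Icc (i+1) n, ∑ k ∈ Finset.Icc 1 (j-1),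
            A * α₀ * ((((j-k : ℕ) : ℝ) + (k : ℝ)) * (w (j-k) t * w k t)) := by
        refine Finset.sum_le_sum fun j hj => Finset.sum_le_sum fun k hk => ?_
        simp only [Finset.mem_Icc] at hj hk
        have hjk1 : 1 ≤ j - k := by omega
        have hk1 : 1 ≤ k := hk.1
        have hNle : N (j-k) k i ≤ α₀ := by
          refine hN_bound (j-k) k i hjk1 hk1 (Finset.mem_Icc.mpr ⟨hi, ?_⟩)
          omega
        have hNn := hN_nonneg (j-k) k i
        have hpn := hp_nonneg (j-k) k
        have hpl := hp_le (j-k) k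
        have han := ha_nonneg (j-k) k
        have hab := ha_bound (j-k) k hjk1 hk1
        have hw1 := hwpos (j-k) hjk1 t ht
        have hw2 := hwpos k hk1 t ht
        have hc1 : N (j-k) k i * (1 - p (j-k) k) ≤ α₀ := by nlinarith
        have hc1' : 0 ≤ N (j-k) k i * (1 - p (j-k) k) := by nlinarith
        have hc2 : N (j-k) k i * (1 - p (j-k) k) * a (j-k) k
            ≤ α₀ * (A * (((j-k : ℕ) : ℝ) + (k : ℝ))) := by
          have hAc : (0:ℝ) ≤ A * (((j-k : ℕ) : ℝ) + (k : ℝ)) := by positivity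
          calc N (j-k) k i * (1 - p (j-k) k) * a (j-k) k
              ≤ α₀ * a (j-k) k := mul_le_mul_of_nonneg_right hc1 han
            _ ≤ α₀ * (A * (((j-k : ℕ) : ℝ) + (k : ℝ))) :=
                mul_le_mul_of_nonneg_left hab (le_of_lt hα₀)
        calc N (j-k) k i * (1 - p (j-k) k) * a (j-k) k * w (j-k) t * w k t
            = (N (j-k) k i * (1 - p (j-k) k) * a (j-k) k) * (w (j-k) t * w k t) := by ring
          _ ≤ (α₀ * (A * (((j-k : ℕ) : ℝ) + (k : ℝ)))) * (w (j-k) t * w k t) := by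
              refine mul_le_mul_of_nonneg_right hc2 (mul_nonneg hw1 hw2)
          _ = A * α₀ * ((((j-k : ℕ) : ℝ) + (k : ℝ)) * (w (j-k) t * w k t)) := by ring
      have step2 : ∑ j ∈ Finset.Icc (i+1) n, ∑ k ∈ Finset.Icc 1 (j-1),
            A * α₀ * ((((j-k : ℕ) : ℝ) + (k : ℝ)) * (w (j-k) t * w k t))
          ≤ ∑ j ∈ Finset.Icc 1 n, ∑ k ∈ Finset.Icc 1 (j-1),
            A * α₀ * ((((j-k : ℕ) : ℝ) + (k : ℝ)) * (w (j-k) t * w k t)) := by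
        refine Finset.sum_le_sum_of_subset_of_nonneg
          (Finset.Icc_subset_Icc (by omega) le_rfl) fun j _ _ => ?_
        refine Finset.sum_nonneg fun k hk => ?_
        simp only [Finset.mem_Icc] at hk
        exact term_nonneg (j-k) k (by omega) hk.1
      have step3 : ∑ j ∈ Finset.Icc 1 n, ∑ k ∈ Finset.Icc 1 (j-1),
            A * α₀ * ((((j-k : ℕ) : ℝ) + (k : ℝ)) * (w (j-k) t * w k t))
          = ∑ l ∈ Finset.Icc 1 n, ∑ k ∈ Finset.Icc 1 (n-l),
            A * α₀ * (((l : ℝ) + (k : ℝ)) * (w l t * w k t)) :=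
        conv_reindex n (fun l k => A * α₀ * (((l : ℝ) + (k : ℝ)) * (w l t * w k t)))
      have step4 : ∑ l ∈ Finset.Icc 1 n, ∑ k ∈ Finset.Icc 1 (n-l),
            A * α₀ * (((l : ℝ) + (k : ℝ)) * (w l t * w k t))
          ≤ ∑ l ∈ Finset.Icc 1 n, ∑ k ∈ Finset.Icc 1 n,
            A * α₀ * (((l : ℝ) + (k : ℝ)) * (w l t * w k t)) := by
        refine Finset.sum_le_sum fun l hl => ?_
        refine Finset.sum_le_sum_of_subset_of_nonneg
          (Finset.Icc_subset_Icc le_rfl (Nat.sub_le n l)) fun k hk _ => ?_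
        simp only [Finset.mem_Icc] at hl hk
        exact term_nonneg l k hl.1 hk.1
      have step5 : ∑ l ∈ Finset.Icc 1 n, ∑ k ∈ Finset.Icc 1 n,
            A * α₀ * (((l : ℝ) + (k : ℝ)) * (w l t * w k t))
          = A * α₀ * ((∑ l ∈ Finset.Icc 1 n, (l : ℝ) * w l t) * (∑ k ∈ Finset.Icc 1 n, w k t)
            + (∑ l ∈ Finset.Icc 1 n, w l t) * (∑ k ∈ Finset.Icc 1 n, (k : ℝ) * w k t)) := by
        rw [Finset.sum_mul_sum, Finset.sum_mul_sum, ← Finset.sum_add_distrib, Finset.mul_sum]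
        refine Finset.sum_congr rfl fun l _ => ?_
        rw [← Finset.sum_add_distrib, Finset.mul_sum]
        exact Finset.sum_congr rfl fun k _ => by ring
      have step6 : A * α₀ * ((∑ l ∈ Finset.Icc 1 n, (l : ℝ) * w l t) * (∑ k ∈ Finset.Icc 1 n, w k t)
            + (∑ l ∈ Finset.Icc 1 n, w l t) * (∑ k ∈ Finset.Icc 1 n, (k : ℝ) * w k t))
          ≤ A * α₀ * (2 * Λ₁ ^ 2) := by
        have hM := hMconst t ht
        have hS := hS_le t ht
        have hSn := hS_nonneg t ht
        have hAa : (0:ℝ) ≤ A * α₀ := by positivity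
        have : (∑ l ∈ Finset.Icc 1 n, (l : ℝ) * w l t) * (∑ k ∈ Finset.Icc 1 n, w k t)
            + (∑ l ∈ Finset.Icc 1 n, w l t) * (∑ k ∈ Finset.Icc 1 n, (k : ℝ) * w k t)
            ≤ 2 * Λ₁ ^ 2 := by
          rw [hM]
          nlinarith
        exact mul_le_mul_of_nonneg_left this hAa
      calc ∑ j ∈ Finset.Icc (i+1) n, ∑ k ∈ Finset.Icc 1 (j-1),
            N (j-k) k i * (1 - p (j-k) k) * a (j-k) k * w (j-k) t * w k t
          ≤ _ := step1
        _ ≤ _ := step2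
        _ = _ := step3
        _ ≤ _ := step4
        _ = _ := step5
        _ ≤ A * α₀ * (2 * Λ₁ ^ 2) := step6
    linarith
  -- main strong induction
  intro i
  induction i using Nat.strong_induction_on with
  | _ i ih =>
    intro hi1
    -- nonnegativity of x j for j < i will come from ih
    have hxode := hx_ode i hi1
    have hx_rhs_nonneg : ∀ t ∈ Set.Icc (0:ℝ) T,
        0 ≤ A / 2 * ∑ j ∈ Finset.Icc 1 (i-1), (Nat.cast i : ℝ) * x j t * x (i-j) t
          + A * α₀ * Λ₁ ^ 2 := by
      intro t ht
      have hsum : 0 ≤ ∑ j ∈ Finset.Icc 1 (i-1), (Nat.cast i : ℝ) * x j t * x (i-j) t := by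
        refine Finset.sum_nonneg fun j hj => ?_
        simp only [Finset.mem_Icc] at hj
        have hj1 : 1 ≤ j := hj.1
        have hij1 : 1 ≤ i - j := by omega
        have hjlt : j < i := by omega
        have hijlt : i - j < i := by omega
        have hxj : 0 ≤ x j t := le_trans (hwpos j hj1 t ht) (ih j hjlt hj1 t ht)
        have hxij : 0 ≤ x (i-j) t := le_trans (hwpos (i-j) hij1 t ht) (ih (i-j) hijlt hij1 t ht)
        positivity
      have : (0:ℝ) ≤ A * α₀ * Λ₁ ^ 2 := by positivity
      have hA2 : (0:ℝ) ≤ A / 2 := by positivity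
      nlinarith
    by_cases hin : i ≤ n
    · -- the truncated equation holds for i
      have hwode := hw_ode i (Finset.mem_Icc.mpr ⟨hi1, hin⟩)
      refine deriv_comp_le (f' := fun t => truncRHS a p N n i (fun j => w j t))
        (g' := fun t => A / 2 * ∑ j ∈ Finset.Icc 1 (i-1), (Nat.cast i : ℝ) * x j t * x (i-j) t
          + A * α₀ * Λ₁ ^ 2) hwode hxode ?_ (h_init i hi1)
      intro t ht
      -- bound the three pieces of truncRHS
      have hgain : (1/2) * ∑ j ∈ Finset.Icc 1 (i-1),
            p j (i-j) * a j (i-j) * w j t * w (i-j) t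
          ≤ A / 2 * ∑ j ∈ Finset.Icc 1 (i-1), (Nat.cast i : ℝ) * x j t * x (i-j) t := by
        rw [Finset.mul_sum, Finset.mul_sum]
        refine Finset.sum_le_sum fun j hj => ?_
        simp only [Finset.mem_Icc] at hj
        have hj1 : 1 ≤ j := hj.1
        have hij1 : 1 ≤ i - j := by omega
        have hjlt : j < i := by omega
        have hijlt : i - j < i := by omega
        have hwj := hwpos j hj1 t ht
        have hwij := hwpos (i-j) hij1 t ht
        have hxj := ih j hjlt hj1 t ht
        have hxij := ih (i-j) hijlt hij1 t ht
        have hcast : (j : ℝ) + ((i - j : ℕ) : ℝ) = (i : ℝ) := by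
          rw [← Nat.cast_add]; congr 1; omega
        have ha' : a j (i-j) ≤ A * (i : ℝ) := by
          rw [← hcast]; exact ha_bound j (i-j) hj1 hij1
        have h1 : p j (i-j) * a j (i-j) ≤ A * (i : ℝ) := by
          calc p j (i-j) * a j (i-j) ≤ 1 * a j (i-j) :=
                mul_le_mul_of_nonneg_right (hp_le j (i-j)) (ha_nonneg j (i-j))
            _ = a j (i-j) := one_mul _
            _ ≤ A * (i : ℝ) := ha'
        have h2 : w j t * w (i-j) t ≤ x j t * x (i-j) t :=
          mul_le_mul hxj hxij hwij (le_trans hwj hxj)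
        have h3 : p j (i-j) * a j (i-j) * w j t * w (i-j) t
            ≤ (A * (i : ℝ)) * (x j t * x (i-j) t) := by
          calc p j (i-j) * a j (i-j) * w j t * w (i-j) t
              = (p j (i-j) * a j (i-j)) * (w j t * w (i-j) t) := by ring
            _ ≤ (A * (i : ℝ)) * (x j t * x (i-j) t) :=
              mul_le_mul h1 h2 (mul_nonneg hwj hwij)
                (by positivity)
        calc (1/2) * (p j (i-j) * a j (i-j) * w j t * w (i-j) t)
            ≤ (1/2) * ((A * (i : ℝ)) * (x j t * x (i-j) t)) := by linarith
          _ = A / 2 * ((i : ℝ) * x j t * x (i-j) t) := by ring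
      have hloss : 0 ≤ ∑ j ∈ Finset.Icc 1 (n-i), a i j * w i t * w j t := by
        refine Finset.sum_nonneg fun j hj => ?_
        simp only [Finset.mem_Icc] at hj
        exact mul_nonneg (mul_nonneg (ha_nonneg i j) (hwpos i hi1 t ht))
          (hwpos j hj.1 t ht)
      have hbr := hbreak i hi1 t ht
      simp only [truncRHS]
      linarith
    · -- i > n : w i ≡ 0
      have hzero : ∀ t ∈ Set.Icc (0:ℝ) T, HasDerivWithinAt (w i) ((fun _ => (0:ℝ)) t)
          (Set.Icc 0 T) t := by
        intro t ht
        have : w i = fun _ => (0:ℝ) := funext fun s => hw_ext i (by omega) s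
        rw [this]
        exact hasDerivWithinAt_const _ _ _
      exact deriv_comp_le (f' := fun _ => (0:ℝ))
        (g' := fun t => A / 2 * ∑ j ∈ Finset.Icc 1 (i-1), (Nat.cast i : ℝ) * x j t * x (i-j) t
          + A * α₀ * Λ₁ ^ 2) hzero hxode hx_rhs_nonneg (h_init i hi1)
end

section
/- Fix T ∈ (0,∞), β ∈ (1,2], and constants A > 0, α_0 > 0. Assume 0 ≤ a_{i,j} = a_{j,i} ≤ A(i+j), 0 ≤ p_{i,j} = p_{j,i} ≤ 1, and 0 ≤ N_{i,j}^s ≤ α_0. Suppose the zero-extended truncated solutions w^n (n ≥ 2) with common nonnegative initial data of first moment Λ_1 satisfy the uniform bounds |w_i^n(t)| ≤ W_i(T) for all n, all i ∈ ℕ, and all t ∈ [0,T]. Then for each i ∈ ℕ there is a constant Γ_i = A(V_i(T)/2 + W_i(T)(i+1)Λ_1 + 2α_0 Λ_1²), with V_i(T) = ∑_{j=1}^{i−1} i W_j(T) W_{i−j}(T), such that |w_i^n(t) − w_i^n(τ)| ≤ Γ_i (t − τ) for all n ≥ 2 and all 0 ≤ τ < t ≤ T; in particular, for each fixed i the family (w_i^n)_{n≥2}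 is equicontinuous on [0,T]. -/
/-- Reindexing bound: the strictly-lower-triangular double sum of nonnegative
terms `F (j-k) k` is bounded by the full square sum. -/
lemma sum_pairs_le (n i : ℕ) (F : ℕ → ℕ → ℝ)
    (hF : ∀ m ∈ Finset.Icc 1 n, ∀ k ∈ Finset.Icc 1 n, 0 ≤ F m k) :
    ∑ j ∈ Finset.Icc (i+1) n, ∑ k ∈ Finset.Icc 1 (j-1), F (j-k) k
      ≤ ∑ m ∈ Finset.Icc 1 n, ∑ k ∈ Finset.Icc 1 n, F m k := by
  rw [Finset.sum_sigma']
  rw [← Finset.sum_product']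
  set S := (Finset.Icc (i+1) n).sigma (fun j => Finset.Icc 1 (j-1)) with hS
  have hinj : ∀ x ∈ S, ∀ y ∈ S,
      (fun q : Σ _ : ℕ, ℕ => (q.1 - q.2, q.2)) x
        = (fun q : Σ _ : ℕ, ℕ => (q.1 - q.2, q.2)) y → x = y := by
    rintro ⟨j₁, k₁⟩ hx ⟨j₂, k₂⟩ hy h
    simp only [Prod.mk.injEq] at h
    obtain ⟨h1, h2⟩ := h
    simp only [hS, Finset.mem_sigma, Finset.mem_Icc] at hx hy
    subst h2
    have : j₁ = j₂ := by omega
    subst this; rfl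
  calc ∑ q ∈ S, F (q.1 - q.2) q.2
      = ∑ q ∈ S.image (fun q : Σ _ : ℕ, ℕ => (q.1 - q.2, q.2)),
          (fun q : ℕ × ℕ => F q.1 q.2) q :=
        (Finset.sum_image (f := fun q : ℕ × ℕ => F q.1 q.2) hinj).symm
    _ ≤ ∑ q ∈ Finset.Icc 1 n ×ˢ Finset.Icc 1 n, F q.1 q.2 := by
        apply Finset.sum_le_sum_of_subset_of_nonneg
        · intro q hq
          simp only [Finset.mem_image] at hq
          obtain ⟨⟨j, k⟩, hjk, rfl⟩ := hq
          simp only [hS, Finset.mem_sigma, Finset.mem_Icc] at hjk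
          simp only [Finset.mem_product, Finset.mem_Icc]
          omega
        · intro q hq _
          simp only [Finset.mem_product] at hq
          exact hF q.1 hq.1 q.2 hq.2

set_option maxHeartbeats 1000000 in
/-- Time equicontinuity of the truncated solutions: under the uniform bounds
`|wᵢⁿ(t)| ≤ Wᵢ(T)` one has `|wᵢⁿ(t) − wᵢⁿ(τ)| ≤ Γᵢ (t − τ)` with
`Γᵢ = A (Vᵢ(T)/2 + Wᵢ(T)(i+1)Λ₁ + 2α₀Λ₁²)` and
`Vᵢ(T) = ∑_{j=1}^{i−1} i Wⱼ(T) W_{i−j}(T)`, uniformly in `n ≥ 2`. -/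
theorem truncated_solutions_equicontinuous
    (T : ℝ) (hT : 0 < T) (β : ℝ) (hβ1 : 1 < β) (hβ2 : β ≤ 2)
    (A α₀ : ℝ) (hA : 0 < A) (hα₀ : 0 < α₀)
    (a p : ℕ → ℕ → ℝ) (N : ℕ → ℕ → ℕ → ℝ)
    (ha_nonneg : ∀ i j, 0 ≤ a i j) (ha_symm : ∀ i j, a i j = a j i)
    (ha_bound : ∀ i j, 1 ≤ i → 1 ≤ j → a i j ≤ A * ((i : ℝ) + (j : ℝ)))
    (hp_nonneg : ∀ i j, 0 ≤ p i j) (hp_symm : ∀ i j, p i j = p j i)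
    (hp_le : ∀ i j, p i j ≤ 1)
    (hN_nonneg : ∀ i j s, 0 ≤ N i j s) (hN_symm : ∀ i j s, N i j s = N j i s)
    (hN_bound : ∀ i j s, 1 ≤ i → 1 ≤ j → s ∈ Finset.Icc 1 (i+j-1) → N i j s ≤ α₀)
    (hN_mass : ∀ i j, 1 ≤ i → 1 ≤ j →
      ∑ s ∈ Finset.Icc 1 (i+j-1), (Nat.cast s : ℝ) * N i j s = (i : ℝ) + (j : ℝ))
    (Λ₁ : ℝ) (hΛ₁ : 0 ≤ Λ₁)
    (w : ℕ → ℕ → ℝ → ℝ)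
    (hw_nonneg : ∀ n, 2 ≤ n → ∀ i ∈ Finset.Icc 1 n, ∀ t ∈ Set.Icc (0:ℝ) T, 0 ≤ w n i t)
    (hw_ode : ∀ n, 2 ≤ n → ∀ i ∈ Finset.Icc 1 n, ∀ t ∈ Set.Icc (0:ℝ) T,
      HasDerivWithinAt (w n i) (truncRHS a p N n i (fun j => w n j t)) (Set.Icc 0 T) t)
    (hw_ext : ∀ n, 2 ≤ n → ∀ i, n < i → ∀ t : ℝ, w n i t = 0)
    (hw_mass : ∀ n, 2 ≤ n → ∀ t ∈ Set.Icc (0:ℝ) T,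
      ∑ i ∈ Finset.Icc 1 n, (Nat.cast i : ℝ) * w n i t ≤ Λ₁)
    (W : ℕ → ℝ)
    (hW : ∀ n, 2 ≤ n → ∀ i, 1 ≤ i → ∀ t ∈ Set.Icc (0:ℝ) T, |w n i t| ≤ W i) :
    ∀ n, 2 ≤ n → ∀ i, 1 ≤ i → ∀ τ t : ℝ, 0 ≤ τ → τ < t → t ≤ T →
      |w n i t - w n i τ|
        ≤ A * ((∑ j ∈ Finset.Icc 1 (i-1), (Nat.cast i : ℝ) * W j * W (i-j)) / 2
            + W i * ((i : ℝ) + 1) * Λ₁ + 2 * α₀ * Λ₁ ^ 2) * (t - τ) := by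
  intro n hn i hi τ t hτ hτt htT
  have hWpos : ∀ j, 1 ≤ j → 0 ≤ W j := fun j hj =>
    (abs_nonneg _).trans (hW 2 le_rfl j hj 0 ⟨le_rfl, hT.le⟩)
  have hVnn : 0 ≤ ∑ j ∈ Finset.Icc 1 (i-1), (Nat.cast i : ℝ) * W j * W (i-j) := by
    apply Finset.sum_nonneg
    intro j hj
    rw [Finset.mem_Icc] at hj
    exact mul_nonneg (mul_nonneg (Nat.cast_nonneg i) (hWpos j hj.1))
      (hWpos (i-j) (by omega))
  have hΓnn : 0 ≤ A * ((∑ j ∈ Finset.Icc 1 (i-1), (Nat.cast i : ℝ) * W j * W (i-j)) / 2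
      + W i * ((i : ℝ) + 1) * Λ₁ + 2 * α₀ * Λ₁ ^ 2) := by
    apply mul_nonneg hA.le
    have h1 : 0 ≤ W i * ((i : ℝ) + 1) * Λ₁ :=
      mul_nonneg (mul_nonneg (hWpos i hi) (by positivity)) hΛ₁
    have h2 : 0 ≤ 2 * α₀ * Λ₁ ^ 2 := by positivity
    linarith [div_nonneg hVnn (by norm_num : (0:ℝ) ≤ 2)]
  by_cases hin : i ≤ n
  · -- main case
    have key : ∀ s ∈ Set.Icc (0:ℝ) T,
        ‖truncRHS a p N n i (fun j => w n j s)‖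
          ≤ A * ((∑ j ∈ Finset.Icc 1 (i-1), (Nat.cast i : ℝ) * W j * W (i-j)) / 2
              + W i * ((i : ℝ) + 1) * Λ₁ + 2 * α₀ * Λ₁ ^ 2) := by
      intro s hs
      set v : ℕ → ℝ := fun j => w n j s with hv
      have hv0 : ∀ j, 1 ≤ j → j ≤ n → 0 ≤ v j := fun j h1 h2 =>
        hw_nonneg n hn j (Finset.mem_Icc.2 ⟨h1, h2⟩) s hs
      have hvW : ∀ j, 1 ≤ j → v j ≤ W j := fun j h1 =>
        le_of_abs_le (hW n hn j h1 s hs)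
      have hmass : ∑ j ∈ Finset.Icc 1 n, (Nat.cast j : ℝ) * v j ≤ Λ₁ :=
        hw_mass n hn s hs
      have hSnn : 0 ≤ ∑ j ∈ Finset.Icc 1 n, (Nat.cast j : ℝ) * v j := by
        apply Finset.sum_nonneg
        intro j hj
        rw [Finset.mem_Icc] at hj
        exact mul_nonneg (Nat.cast_nonneg j) (hv0 j hj.1 hj.2)
      -- Term 1
      have hT1nn : 0 ≤ ∑ j ∈ Finset.Icc 1 (i-1),
          p j (i-j) * a j (i-j) * v j * v (i-j) := by
        apply Finset.sum_nonneg
        intro j hj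
        rw [Finset.mem_Icc] at hj
        exact mul_nonneg (mul_nonneg (mul_nonneg (hp_nonneg _ _) (ha_nonneg _ _))
          (hv0 j hj.1 (by omega))) (hv0 (i-j) (by omega) (by omega))
      have hT1 : ∑ j ∈ Finset.Icc 1 (i-1), p j (i-j) * a j (i-j) * v j * v (i-j)
          ≤ ∑ j ∈ Finset.Icc 1 (i-1), A * ((Nat.cast i : ℝ) * W j * W (i-j)) := by
        apply Finset.sum_le_sum
        intro j hj
        rw [Finset.mem_Icc] at hj
        have hj1 : 1 ≤ j := hj.1
        have hji : j ≤ i - 1 := hj.2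
        have hij1 : 1 ≤ i - j := by omega
        have hvj : 0 ≤ v j := hv0 j hj1 (by omega)
        have hvij : 0 ≤ v (i-j) := hv0 (i-j) hij1 (by omega)
        have ha' : a j (i-j) ≤ A * (i : ℝ) := by
          have := ha_bound j (i-j) hj1 hij1
          rwa [Nat.cast_sub (by omega : j ≤ i), add_sub_cancel] at this
        have hpa : p j (i-j) * a j (i-j) ≤ A * (i : ℝ) := by
          calc p j (i-j) * a j (i-j) ≤ 1 * (A * (i : ℝ)) :=
                mul_le_mul (hp_le _ _) ha' (ha_nonneg _ _) zero_le_one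
            _ = A * (i : ℝ) := one_mul _
        have hAi : (0:ℝ) ≤ A * (i : ℝ) := by positivity
        calc p j (i-j) * a j (i-j) * v j * v (i-j)
            ≤ A * (i : ℝ) * W j * W (i-j) := by
              apply mul_le_mul _ (hvW (i-j) hij1) hvij
                (mul_nonneg hAi (hWpos j hj1))
              exact mul_le_mul hpa (hvW j hj1) hvj hAi
          _ = A * ((Nat.cast i : ℝ) * W j * W (i-j)) := by ring
      -- Term 2
      have hT2nn : 0 ≤ ∑ j ∈ Finset.Icc 1 (n-i), a i j * v i * v j := by
        apply Finset.sum_nonneg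
        intro j hj
        rw [Finset.mem_Icc] at hj
        exact mul_nonneg (mul_nonneg (ha_nonneg _ _) (hv0 i hi hin))
          (hv0 j hj.1 (by omega))
      have hT2 : ∑ j ∈ Finset.Icc 1 (n-i), a i j * v i * v j
          ≤ A * W i * ((i : ℝ) + 1) * Λ₁ := by
        have step : ∑ j ∈ Finset.Icc 1 (n-i), a i j * v i * v j
            ≤ ∑ j ∈ Finset.Icc 1 (n-i),
                A * W i * ((i : ℝ) + 1) * ((Nat.cast j : ℝ) * v j) := by
          apply Finset.sum_le_sum
          intro j hj
          rw [Finset.mem_Icc] at hj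
          have hj1 : 1 ≤ j := hj.1
          have hjn : j ≤ n := by omega
          have hvj : 0 ≤ v j := hv0 j hj1 hjn
          have hvi : 0 ≤ v i := hv0 i hi hin
          have e1 : a i j * v i ≤ A * ((i : ℝ) + (j : ℝ)) * W i :=
            mul_le_mul (ha_bound i j hi hj1) (hvW i hi) hvi (by positivity)
          have e2 : a i j * v i * v j ≤ A * ((i : ℝ) + (j : ℝ)) * W i * v j :=
            mul_le_mul_of_nonneg_right e1 hvj
          have h1j : (1:ℝ) ≤ (j : ℝ) := by exact_mod_cast hj1
          have hij : (i : ℝ) + (j : ℝ) ≤ ((i : ℝ) + 1) * (j : ℝ) := by nlinarith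
          have e3 : A * ((i : ℝ) + (j : ℝ)) ≤ A * (((i : ℝ) + 1) * (j : ℝ)) :=
            mul_le_mul_of_nonneg_left hij hA.le
          have e4 : A * ((i : ℝ) + (j : ℝ)) * W i * v j
              ≤ A * (((i : ℝ) + 1) * (j : ℝ)) * W i * v j :=
            mul_le_mul_of_nonneg_right
              (mul_le_mul_of_nonneg_right e3 (hWpos i hi)) hvj
          calc a i j * v i * v j ≤ A * (((i : ℝ) + 1) * (j : ℝ)) * W i * v j :=
                le_trans e2 e4
            _ = A * W i * ((i : ℝ) + 1) * ((Nat.cast j : ℝ) * v j) := by ring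
        have hsub : ∑ j ∈ Finset.Icc 1 (n-i), (Nat.cast j : ℝ) * v j ≤ Λ₁ := by
          refine le_trans (Finset.sum_le_sum_of_subset_of_nonneg
            (Finset.Icc_subset_Icc le_rfl (Nat.sub_le n i)) ?_) hmass
          intro j hj _
          rw [Finset.mem_Icc] at hj
          exact mul_nonneg (Nat.cast_nonneg j) (hv0 j hj.1 hj.2)
        have hc : (0:ℝ) ≤ A * W i * ((i : ℝ) + 1) :=
          mul_nonneg (mul_nonneg hA.le (hWpos i hi)) (by positivity)
        calc ∑ j ∈ Finset.Icc 1 (n-i), a i j * v i * v j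
            ≤ ∑ j ∈ Finset.Icc 1 (n-i),
                A * W i * ((i : ℝ) + 1) * ((Nat.cast j : ℝ) * v j) := step
          _ = A * W i * ((i : ℝ) + 1)
              * ∑ j ∈ Finset.Icc 1 (n-i), (Nat.cast j : ℝ) * v j := by
              rw [Finset.mul_sum]
          _ ≤ A * W i * ((i : ℝ) + 1) * Λ₁ := mul_le_mul_of_nonneg_left hsub hc
      -- Term 3
      have hT3nn : 0 ≤ ∑ j ∈ Finset.Icc (i+1) n, ∑ k ∈ Finset.Icc 1 (j-1),
          N (j-k) k i * (1 - p (j-k) k) * a (j-k) k * v (j-k) * v k := by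
        apply Finset.sum_nonneg
        intro j hj
        rw [Finset.mem_Icc] at hj
        apply Finset.sum_nonneg
        intro k hk
        rw [Finset.mem_Icc] at hk
        exact mul_nonneg (mul_nonneg (mul_nonneg (mul_nonneg (hN_nonneg _ _ _)
          (sub_nonneg.2 (hp_le _ _))) (ha_nonneg _ _))
          (hv0 (j-k) (by omega) (by omega))) (hv0 k hk.1 (by omega))
      have hT3 : ∑ j ∈ Finset.Icc (i+1) n, ∑ k ∈ Finset.Icc 1 (j-1),
          N (j-k) k i * (1 - p (j-k) k) * a (j-k) k * v (j-k) * v k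
          ≤ 2 * α₀ * A * Λ₁ * Λ₁ := by
        have step1 : ∑ j ∈ Finset.Icc (i+1) n, ∑ k ∈ Finset.Icc 1 (j-1),
            N (j-k) k i * (1 - p (j-k) k) * a (j-k) k * v (j-k) * v k
            ≤ ∑ j ∈ Finset.Icc (i+1) n, ∑ k ∈ Finset.Icc 1 (j-1),
                2 * α₀ * A * ((Nat.cast (j-k) : ℝ) * v (j-k))
                  * ((Nat.cast k : ℝ) * v k) := by
          apply Finset.sum_le_sum
          intro j hj
          rw [Finset.mem_Icc] at hj
          apply Finset.sum_le_sum
          intro k hk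
          rw [Finset.mem_Icc] at hk
          have hk1 : 1 ≤ k := hk.1
          have hm1 : 1 ≤ j - k := by omega
          have hmn : j - k ≤ n := by omega
          have hkn : k ≤ n := by omega
          have hvm : 0 ≤ v (j-k) := hv0 (j-k) hm1 hmn
          have hvk : 0 ≤ v k := hv0 k hk1 hkn
          have hNb : N (j-k) k i ≤ α₀ :=
            hN_bound (j-k) k i hm1 hk1 (Finset.mem_Icc.2 ⟨hi, by omega⟩)
          have h1p0 : 0 ≤ 1 - p (j-k) k := sub_nonneg.2 (hp_le _ _)
          have sNp : N (j-k) k i * (1 - p (j-k) k) ≤ α₀ := by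
            calc N (j-k) k i * (1 - p (j-k) k) ≤ α₀ * 1 :=
                  mul_le_mul hNb (by linarith [hp_nonneg (j-k) k]) h1p0 hα₀.le
              _ = α₀ := mul_one _
          have ha' : a (j-k) k ≤ A * ((Nat.cast (j-k) : ℝ) + (k : ℝ)) :=
            ha_bound (j-k) k hm1 hk1
          have sNpa : N (j-k) k i * (1 - p (j-k) k) * a (j-k) k
              ≤ α₀ * (A * ((Nat.cast (j-k) : ℝ) + (k : ℝ))) :=
            mul_le_mul sNp ha' (ha_nonneg _ _) hα₀.le
          have e2 : N (j-k) k i * (1 - p (j-k) k) * a (j-k) k * v (j-k) * v k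
              ≤ α₀ * (A * ((Nat.cast (j-k) : ℝ) + (k : ℝ))) * v (j-k) * v k :=
            mul_le_mul_of_nonneg_right
              (mul_le_mul_of_nonneg_right sNpa hvm) hvk
          have h1m : (1:ℝ) ≤ (Nat.cast (j-k) : ℝ) := by exact_mod_cast hm1
          have h1k : (1:ℝ) ≤ (k : ℝ) := by exact_mod_cast hk1
          have hmk : (Nat.cast (j-k) : ℝ) + (k : ℝ)
              ≤ 2 * ((Nat.cast (j-k) : ℝ) * (k : ℝ)) := by nlinarith
          have hcnn : 0 ≤ α₀ * A * (v (j-k) * v k) :=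
            mul_nonneg (mul_nonneg hα₀.le hA.le) (mul_nonneg hvm hvk)
          have e3 := mul_le_mul_of_nonneg_left hmk hcnn
          linarith [e2, e3]
        have step2 := sum_pairs_le n i
          (fun m k => 2 * α₀ * A * ((Nat.cast m : ℝ) * v m)
            * ((Nat.cast k : ℝ) * v k))
          (by
            intro m hm k hk
            rw [Finset.mem_Icc] at hm hk
            exact mul_nonneg (mul_nonneg (by positivity)
              (mul_nonneg (Nat.cast_nonneg m) (hv0 m hm.1 hm.2)))
              (mul_nonneg (Nat.cast_nonneg k) (hv0 k hk.1 hk.2)))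
        have step3 : ∑ m ∈ Finset.Icc 1 n, ∑ k ∈ Finset.Icc 1 n,
            2 * α₀ * A * ((Nat.cast m : ℝ) * v m) * ((Nat.cast k : ℝ) * v k)
            = (∑ m ∈ Finset.Icc 1 n, 2 * α₀ * A * ((Nat.cast m : ℝ) * v m))
              * (∑ k ∈ Finset.Icc 1 n, (Nat.cast k : ℝ) * v k) :=
          (Finset.sum_mul_sum _ _ _ _).symm
        have step4 : (∑ m ∈ Finset.Icc 1 n, 2 * α₀ * A * ((Nat.cast m : ℝ) * v m))
            = 2 * α₀ * A * ∑ m ∈ Finset.Icc 1 n, (Nat.cast m : ℝ) * v m := by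
          rw [Finset.mul_sum]
        have hfin : (2 * α₀ * A * ∑ m ∈ Finset.Icc 1 n, (Nat.cast m : ℝ) * v m)
              * (∑ k ∈ Finset.Icc 1 n, (Nat.cast k : ℝ) * v k)
            ≤ 2 * α₀ * A * Λ₁ * Λ₁ := by
          apply mul_le_mul _ hmass hSnn (by positivity)
          exact mul_le_mul_of_nonneg_left hmass (by positivity)
        calc ∑ j ∈ Finset.Icc (i+1) n, ∑ k ∈ Finset.Icc 1 (j-1),
            N (j-k) k i * (1 - p (j-k) k) * a (j-k) k * v (j-k) * v k
            ≤ ∑ m ∈ Finset.Icc 1 n, ∑ k ∈ Finset.Icc 1 n,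
                2 * α₀ * A * ((Nat.cast m : ℝ) * v m) * ((Nat.cast k : ℝ) * v k) :=
              le_trans step1 step2
          _ ≤ 2 * α₀ * A * Λ₁ * Λ₁ := by rw [step3, step4]; exact hfin
      -- assemble
      have hT1' : ∑ j ∈ Finset.Icc 1 (i-1), p j (i-j) * a j (i-j) * v j * v (i-j)
          ≤ A * ∑ j ∈ Finset.Icc 1 (i-1), (Nat.cast i : ℝ) * W j * W (i-j) := by
        rw [Finset.mul_sum]; exact hT1
      have hAV : 0 ≤ A * ∑ j ∈ Finset.Icc 1 (i-1),
          (Nat.cast i : ℝ) * W j * W (i-j) := mul_nonneg hA.le hVnn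
      have hAW : 0 ≤ A * W i * ((i : ℝ) + 1) * Λ₁ :=
        mul_nonneg (mul_nonneg (mul_nonneg hA.le (hWpos i hi)) (by positivity)) hΛ₁
      have hAα : 0 ≤ 2 * α₀ * A * Λ₁ * Λ₁ :=
        mul_nonneg (mul_nonneg (mul_nonneg (mul_nonneg (by norm_num) hα₀.le)
          hA.le) hΛ₁) hΛ₁
      rw [Real.norm_eq_abs, truncRHS, abs_le]
      constructor
      · linarith [hT1', hT2, hT3, hT1nn, hT2nn, hT3nn, hAV, hAW, hAα]
      · linarith [hT1', hT2, hT3, hT1nn, hT2nn, hT3nn, hAV, hAW, hAα]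
    have mvt := Convex.norm_image_sub_le_of_norm_hasDerivWithin_le
      (f := w n i) (f' := fun s => truncRHS a p N n i (fun j => w n j s))
      (fun s hs => hw_ode n hn i (Finset.mem_Icc.2 ⟨hi, hin⟩) s hs) key
      (convex_Icc 0 T) (⟨hτ, le_trans hτt.le htT⟩ : τ ∈ Set.Icc (0:ℝ) T)
      (⟨le_trans hτ hτt.le, htT⟩ : t ∈ Set.Icc (0:ℝ) T)
    rw [Real.norm_eq_abs, Real.norm_eq_abs, abs_of_pos (by linarith : (0:ℝ) < t - τ)]
      at mvt
    exact mvt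
  · -- i > n : solution is identically zero
    push_neg at hin
    rw [hw_ext n hn i hin t, hw_ext n hn i hin τ, sub_zero, abs_zero]
    exact mul_nonneg hΓnn (by linarith)
end
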